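/- arXiv:2403.02051 — 8 statements merged into one kernel-verified Lean document; each statement's English description precedes it below -/
import Mathlib

section
/- Suppose Assumptions 1, 2 and 3 hold, let X ∈ 𝒳ⁿ be a dataset and let Ω ⊆ {1,…,n} be any nonempty subset. Then for every η ≥ 0 and every θ ∈ ℝ^d, ‖θ − ϑ⋆ − η ∇F_Ω(θ, X)‖² ≤ (1 − 2ηm + η² K₁²) ‖θ − ϑ⋆‖² + 2ηK. -/
open scoped BigOperators RealInnerProductSpace

/-- Under Assumptions 1, 2 and 3, one SGD step with any nonempty minibatch
`S` contracts the squared distance to the universal stable point `ϑ⋆`: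
`‖θ - ϑ⋆ - η ∇F_S(θ,X)‖² ≤ (1 - 2ηm + η²K₁²)‖θ - ϑ⋆‖² + 2ηK`. -/
theorem sgd_step_contraction
    {d : ℕ} {H : Type*} [NormedAddCommGroup H] [InnerProductSpace ℝ H]
    (𝒳 : Set H) (f : EuclideanSpace ℝ (Fin d) → H → ℝ)
    (K₁ K₂ : ℝ) (hK₁ : 0 < K₁) (hK₂ : 0 < K₂)
    (hdiff : ∀ x ∈ 𝒳, Differentiable ℝ (fun θ => f θ x))
    (hA1 : ∀ (θ θ' : EuclideanSpace ℝ (Fin d)), ∀ x ∈ 𝒳, ∀ x' ∈ 𝒳,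
      ‖gradient (fun ϑ => f ϑ x) θ - gradient (fun ϑ => f ϑ x') θ'‖ ≤
        K₁ * ‖θ - θ'‖ + K₂ * ‖x - x'‖ * (‖θ‖ + ‖θ'‖ + 1))
    (B m K : ℝ) (hB : 0 < B) (hm : 0 < m) (hK : 0 < K)
    (hA2a : ∀ x ∈ 𝒳, ‖gradient (fun ϑ => f ϑ x) 0‖ ≤ B)
    (hA2b : ∀ (θ₁ θ₂ : EuclideanSpace ℝ (Fin d)), ∀ x ∈ 𝒳,
      m * ‖θ₁ - θ₂‖ ^ 2 - K ≤
        ⟪gradient (fun ϑ => f ϑ x) θ₁ - gradient (fun ϑ => f ϑ x) θ₂, θ₁ - θ₂⟫)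
    (ϑstar : EuclideanSpace ℝ (Fin d))
    (hA3 : ∀ x ∈ 𝒳, gradient (fun ϑ => f ϑ x) ϑstar = 0)
    {n : ℕ} (hn : 0 < n) (X : Fin n → H) (hX : ∀ i, X i ∈ 𝒳)
    (S : Finset (Fin n)) (hS : S.Nonempty)
    (η : ℝ) (hη : 0 ≤ η) (θ : EuclideanSpace ℝ (Fin d)) :
    ‖θ - ϑstar - η • ((S.card : ℝ)⁻¹ • ∑ j ∈ S, gradient (fun ϑ => f ϑ (X j)) θ)‖ ^ 2
      ≤ (1 - 2 * η * m + η ^ 2 * K₁ ^ 2) * ‖θ - ϑstar‖ ^ 2 + 2 * η * K := by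
  set a := θ - ϑstar with ha
  set g := (S.card : ℝ)⁻¹ • ∑ j ∈ S, gradient (fun ϑ => f ϑ (X j)) θ with hg
  have hc : (0:ℝ) < (S.card : ℝ) := by
    exact_mod_cast Finset.card_pos.mpr hS
  have hterm_norm : ∀ j ∈ S, ‖gradient (fun ϑ => f ϑ (X j)) θ‖ ≤ K₁ * ‖a‖ := by
    intro j _
    have h := hA1 θ ϑstar (X j) (hX j) (X j) (hX j)
    rw [hA3 (X j) (hX j)] at h
    simpa [sub_self] using h
  have hterm_inner : ∀ j ∈ S,
      m * ‖a‖ ^ 2 - K ≤ ⟪gradient (fun ϑ => f ϑ (X j)) θ, a⟫ := by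
    intro j _
    have h := hA2b θ ϑstar (X j) (hX j)
    rwa [hA3 (X j) (hX j), sub_zero] at h
  have hnorm : ‖g‖ ≤ K₁ * ‖a‖ := by
    rw [hg, norm_smul]
    calc ‖(S.card : ℝ)⁻¹‖ * ‖∑ j ∈ S, gradient (fun ϑ => f ϑ (X j)) θ‖
        ≤ (S.card : ℝ)⁻¹ * ∑ j ∈ S, ‖gradient (fun ϑ => f ϑ (X j)) θ‖ := by
          rw [Real.norm_eq_abs, abs_of_pos (inv_pos.mpr hc)]
          exact mul_le_mul_of_nonneg_left (norm_sum_le S _)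
            (inv_pos.mpr hc).le
      _ ≤ (S.card : ℝ)⁻¹ * ((S.card : ℝ) * (K₁ * ‖a‖)) := by
          refine mul_le_mul_of_nonneg_left ?_ (inv_pos.mpr hc).le
          calc ∑ j ∈ S, ‖gradient (fun ϑ => f ϑ (X j)) θ‖
              ≤ ∑ _j ∈ S, K₁ * ‖a‖ := Finset.sum_le_sum hterm_norm
            _ = (S.card : ℝ) * (K₁ * ‖a‖) := by
                rw [Finset.sum_const, nsmul_eq_mul]
      _ = K₁ * ‖a‖ := by field_simp
  have hinner : m * ‖a‖ ^ 2 - K ≤ ⟪g, a⟫ := by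
    rw [hg, real_inner_smul_left, sum_inner]
    calc m * ‖a‖ ^ 2 - K
        = (S.card : ℝ)⁻¹ * ((S.card : ℝ) * (m * ‖a‖ ^ 2 - K)) := by field_simp
      _ ≤ (S.card : ℝ)⁻¹ * ∑ j ∈ S, ⟪gradient (fun ϑ => f ϑ (X j)) θ, a⟫ := by
          refine mul_le_mul_of_nonneg_left ?_ (inv_pos.mpr hc).le
          calc (S.card : ℝ) * (m * ‖a‖ ^ 2 - K)
              = ∑ _j ∈ S, (m * ‖a‖ ^ 2 - K) := by
                rw [Finset.sum_const, nsmul_eq_mul]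
            _ ≤ _ := Finset.sum_le_sum hterm_inner
  have hexp : ‖a - η • g‖ ^ 2 = ‖a‖ ^ 2 - 2 * (η * ⟪a, g⟫) + η ^ 2 * ‖g‖ ^ 2 := by
    rw [@norm_sub_sq_real, real_inner_smul_right, norm_smul, mul_pow,
      Real.norm_eq_abs, sq_abs]
  rw [hexp]
  have hgsq : ‖g‖ ^ 2 ≤ (K₁ * ‖a‖) ^ 2 := by
    have := norm_nonneg g
    nlinarith
  have hsym : ⟪a, g⟫ = ⟪g, a⟫ := real_inner_comm g a
  nlinarith [mul_le_mul_of_nonneg_left hgsq (sq_nonneg η),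
    mul_le_mul_of_nonneg_left hinner hη]
end

section
/- Suppose Assumptions 1, 2 and 3 hold, let X ∈ 𝒳ⁿ be a dataset, let p ∈ (0,1], let 0 < η < min(m/K₁², 1/m), let σ > 0, and let ξ be a random vector in ℝ^d with 𝔼‖ξ‖^p < ∞. Then for every θ ∈ ℝ^d, 𝔼[V_p(θ − η ∇F(θ, X) + σξ)] ≤ (1 − ηmp/2) V_p(θ) + 1 + (2ηK)^{p/2} + σ^p 𝔼‖ξ‖^p. -/
open scoped BigOperators RealInnerProductSpace
open MeasureTheory

lemma my_rpow_add_le {x y q : ℝ} (hx : 0 ≤ x) (hy : 0 ≤ y) (hq : 0 ≤ q) (hq1 : q ≤ 1) :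
    (x + y) ^ q ≤ x ^ q + y ^ q := by
  have h := NNReal.rpow_add_le_add_rpow x.toNNReal y.toNNReal hq hq1
  have h2 := NNReal.coe_le_coe.2 h
  push_cast at h2
  rwa [Real.coe_toNNReal _ hx, Real.coe_toNNReal _ hy] at h2

lemma my_key {a b c q : ℝ} (ha : 0 ≤ a) (hb : 0 ≤ b) (hc0 : 0 ≤ c) (hc : c ≤ a + b)
    (hq : 0 ≤ q) (hq1 : q ≤ 1) :
    (1 + c ^ 2) ^ (q / 2) ≤ (1 + a ^ 2) ^ (q / 2) + b ^ q := by
  set s := Real.sqrt (1 + a ^ 2) with hs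
  have hs0 : 0 ≤ s := Real.sqrt_nonneg _
  have hssq : s ^ 2 = 1 + a ^ 2 := Real.sq_sqrt (by positivity)
  have has : a ≤ s := by nlinarith
  have hc2 : 1 + c ^ 2 ≤ (s + b) ^ 2 := by nlinarith
  have hsqrt : Real.sqrt (1 + c ^ 2) ≤ s + b := by
    calc Real.sqrt (1 + c ^ 2) ≤ Real.sqrt ((s + b) ^ 2) := Real.sqrt_le_sqrt hc2
    _ = s + b := Real.sqrt_sq (by positivity)
  calc (1 + c ^ 2) ^ (q / 2) = Real.sqrt (1 + c ^ 2) ^ q :=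
        Real.rpow_div_two_eq_sqrt q (by positivity)
    _ ≤ (s + b) ^ q := Real.rpow_le_rpow (Real.sqrt_nonneg _) hsqrt hq
    _ ≤ s ^ q + b ^ q := my_rpow_add_le hs0 hb hq hq1
    _ = (1 + a ^ 2) ^ (q / 2) + b ^ q := by
        rw [Real.rpow_div_two_eq_sqrt q (by positivity : (0:ℝ) ≤ 1 + a ^ 2)]

set_option maxHeartbeats 1000000 in
/-- Under Assumptions 1, 2 and 3, for `p ∈ (0,1]`,
`0 < η < min(m/K₁², 1/m)`, `σ > 0` and a random vector `ξ` with `𝔼‖ξ‖^p < ∞`, the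
Lyapunov function `V_p(θ) = (1 + ‖θ - ϑ⋆‖²)^{p/2}` satisfies a Foster–Lyapunov drift
condition along one noisy GD step. -/
theorem lyapunov_drift_gd
    {d : ℕ} {H : Type*} [NormedAddCommGroup H] [InnerProductSpace ℝ H]
    (𝒳 : Set H) (f : EuclideanSpace ℝ (Fin d) → H → ℝ)
    (K₁ K₂ : ℝ) (hK₁ : 0 < K₁) (hK₂ : 0 < K₂)
    (hdiff : ∀ x ∈ 𝒳, Differentiable ℝ (fun θ => f θ x))
    (hA1 : ∀ (θ θ' : EuclideanSpace ℝ (Fin d)), ∀ x ∈ 𝒳, ∀ x' ∈ 𝒳,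
      ‖gradient (fun ϑ => f ϑ x) θ - gradient (fun ϑ => f ϑ x') θ'‖ ≤
        K₁ * ‖θ - θ'‖ + K₂ * ‖x - x'‖ * (‖θ‖ + ‖θ'‖ + 1))
    (B m K : ℝ) (hB : 0 < B) (hm : 0 < m) (hK : 0 < K)
    (hA2a : ∀ x ∈ 𝒳, ‖gradient (fun ϑ => f ϑ x) 0‖ ≤ B)
    (hA2b : ∀ (θ₁ θ₂ : EuclideanSpace ℝ (Fin d)), ∀ x ∈ 𝒳,
      m * ‖θ₁ - θ₂‖ ^ 2 - K ≤
        ⟪gradient (fun ϑ => f ϑ x) θ₁ - gradient (fun ϑ => f ϑ x) θ₂, θ₁ - θ₂⟫)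
    (ϑstar : EuclideanSpace ℝ (Fin d))
    (hA3 : ∀ x ∈ 𝒳, gradient (fun ϑ => f ϑ x) ϑstar = 0)
    {n : ℕ} (hn : 0 < n) (X : Fin n → H) (hX : ∀ i, X i ∈ 𝒳)
    (p : ℝ) (hp0 : 0 < p) (hp1 : p ≤ 1)
    (η : ℝ) (hη0 : 0 < η) (hη : η < min (m / K₁ ^ 2) (1 / m))
    (σ : ℝ) (hσ : 0 < σ)
    {Ω : Type*} [MeasurableSpace Ω] (μ : Measure Ω) [IsProbabilityMeasure μ]
    (ξ : Ω → EuclideanSpace ℝ (Fin d)) (hξ : Measurable ξ)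
    (hint : Integrable (fun ω => ‖ξ ω‖ ^ p) μ)
    (θ : EuclideanSpace ℝ (Fin d)) :
    ∫ ω, (1 + ‖θ - η • ((n : ℝ)⁻¹ • ∑ j : Fin n, gradient (fun ϑ => f ϑ (X j)) θ)
            + σ • ξ ω - ϑstar‖ ^ 2) ^ (p / 2) ∂μ
      ≤ (1 - η * m * p / 2) * (1 + ‖θ - ϑstar‖ ^ 2) ^ (p / 2)
        + 1 + (2 * η * K) ^ (p / 2) + σ ^ p * ∫ ω, ‖ξ ω‖ ^ p ∂μ := by
  set G : EuclideanSpace ℝ (Fin d) :=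
    (n : ℝ)⁻¹ • ∑ j : Fin n, gradient (fun ϑ => f ϑ (X j)) θ with hGdef
  set u : EuclideanSpace ℝ (Fin d) := θ - ϑstar with hudef
  have hηm : η * m < 1 := by
    have := (lt_min_iff.1 hη).2
    rw [lt_div_iff₀ hm] at this
    linarith
  have hηK₁ : η * K₁ ^ 2 < m := by
    have := (lt_min_iff.1 hη).1
    rw [lt_div_iff₀ (by positivity)] at this
    linarith
  -- norm bound on each gradient
  have hgj : ∀ j : Fin n, ‖gradient (fun ϑ => f ϑ (X j)) θ‖ ≤ K₁ * ‖u‖ := by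
    intro j
    have h := hA1 θ ϑstar (X j) (hX j) (X j) (hX j)
    rw [hA3 (X j) (hX j), sub_zero, sub_self, norm_zero, mul_zero, zero_mul, add_zero] at h
    exact h
  have hGn : ‖G‖ ≤ K₁ * ‖u‖ := by
    rw [hGdef]
    calc ‖(n : ℝ)⁻¹ • ∑ j : Fin n, gradient (fun ϑ => f ϑ (X j)) θ‖
        = (n : ℝ)⁻¹ * ‖∑ j : Fin n, gradient (fun ϑ => f ϑ (X j)) θ‖ := by
          rw [norm_smul, Real.norm_eq_abs, abs_of_nonneg (by positivity)]
      _ ≤ (n : ℝ)⁻¹ * ∑ j : Fin n, ‖gradient (fun ϑ => f ϑ (X j)) θ‖ := by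
          gcongr
          exact norm_sum_le _ _
      _ ≤ (n : ℝ)⁻¹ * ∑ j : Fin n, K₁ * ‖u‖ := by
          gcongr with j
          exact hgj j
      _ = K₁ * ‖u‖ := by
          rw [Finset.sum_const, Finset.card_univ, Fintype.card_fin, nsmul_eq_mul]
          field_simp
  have hGi : m * ‖u‖ ^ 2 - K ≤ ⟪G, u⟫ := by
    have hterm : ∀ j : Fin n,
        m * ‖u‖ ^ 2 - K ≤ ⟪gradient (fun ϑ => f ϑ (X j)) θ, u⟫ := by
      intro j
      have h := hA2b θ ϑstar (X j) (hX j)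
      rwa [hA3 (X j) (hX j), sub_zero] at h
    have hinner : ⟪G, u⟫ = (n : ℝ)⁻¹ * ∑ j : Fin n, ⟪gradient (fun ϑ => f ϑ (X j)) θ, u⟫ := by
      rw [hGdef, real_inner_smul_left, sum_inner]
    rw [hinner]
    have hsum : (n : ℝ) * (m * ‖u‖ ^ 2 - K) ≤
        ∑ j : Fin n, ⟪gradient (fun ϑ => f ϑ (X j)) θ, u⟫ := by
      calc (n : ℝ) * (m * ‖u‖ ^ 2 - K) = ∑ _j : Fin n, (m * ‖u‖ ^ 2 - K) := by
            rw [Finset.sum_const, Finset.card_univ, Fintype.card_fin, nsmul_eq_mul]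
        _ ≤ _ := Finset.sum_le_sum fun j _ => hterm j
    have hn' : (0:ℝ) < (n : ℝ) := by exact_mod_cast hn
    calc m * ‖u‖ ^ 2 - K = (n : ℝ)⁻¹ * ((n : ℝ) * (m * ‖u‖ ^ 2 - K)) := by field_simp
      _ ≤ _ := by
          apply mul_le_mul_of_nonneg_left hsum (by positivity)
  -- drift bound on ‖u - η•G‖²
  have hdrift : ‖u - η • G‖ ^ 2 ≤ (1 - η * m) * ‖u‖ ^ 2 + 2 * η * K := by
    have hexp : ‖u - η • G‖ ^ 2 = ‖u‖ ^ 2 - 2 * (η * ⟪G, u⟫) + η ^ 2 * ‖G‖ ^ 2 := by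
      rw [@norm_sub_sq_real, real_inner_smul_right, norm_smul, Real.norm_eq_abs,
        abs_of_nonneg hη0.le, mul_pow, real_inner_comm]
    rw [hexp]
    have h1 : η * (m * ‖u‖ ^ 2 - K) ≤ η * ⟪G, u⟫ := by
      apply mul_le_mul_of_nonneg_left hGi hη0.le
    have h2 : ‖G‖ ^ 2 ≤ (K₁ * ‖u‖) ^ 2 :=
      pow_le_pow_left₀ (norm_nonneg G) hGn 2
    have h3 : η ^ 2 * ‖G‖ ^ 2 ≤ η * m * ‖u‖ ^ 2 := by
      nlinarith [mul_le_mul_of_nonneg_left h2 (sq_nonneg η),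
        mul_le_mul_of_nonneg_right hηK₁.le (mul_nonneg hη0.le (sq_nonneg ‖u‖))]
    nlinarith [h1, h3]
  -- pointwise bound on integrand
  have hpt : ∀ ω, (1 + ‖θ - η • G + σ • ξ ω - ϑstar‖ ^ 2) ^ (p / 2)
      ≤ (1 + ‖u - η • G‖ ^ 2) ^ (p / 2) + σ ^ p * ‖ξ ω‖ ^ p := by
    intro ω
    have hvec : θ - η • G + σ • ξ ω - ϑstar = (u - η • G) + σ • ξ ω := by
      rw [hudef]; abel
    have htri : ‖θ - η • G + σ • ξ ω - ϑstar‖ ≤ ‖u - η • G‖ + σ * ‖ξ ω‖ := by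
      rw [hvec]
      calc ‖(u - η • G) + σ • ξ ω‖ ≤ ‖u - η • G‖ + ‖σ • ξ ω‖ := norm_add_le _ _
        _ = ‖u - η • G‖ + σ * ‖ξ ω‖ := by
            rw [norm_smul, Real.norm_eq_abs, abs_of_nonneg hσ.le]
    have := my_key (a := ‖u - η • G‖) (b := σ * ‖ξ ω‖)
      (c := ‖θ - η • G + σ • ξ ω - ϑstar‖) (norm_nonneg _) (by positivity)
      (norm_nonneg _) htri hp0.le hp1
    rwa [Real.mul_rpow hσ.le (norm_nonneg _)] at this
  -- deterministic part bound
  have hdet : (1 + ‖u - η • G‖ ^ 2) ^ (p / 2)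
      ≤ (1 - η * m * p / 2) * (1 + ‖u‖ ^ 2) ^ (p / 2) + 1 + (2 * η * K) ^ (p / 2) := by
    have hq : 0 ≤ p / 2 := by positivity
    have hq1 : p / 2 ≤ 1 := by linarith
    have h1 : 1 + ‖u - η • G‖ ^ 2 ≤
        (1 - η * m) * (1 + ‖u‖ ^ 2) + (η * m + 2 * η * K) := by nlinarith
    have hmono : (1 + ‖u - η • G‖ ^ 2) ^ (p / 2) ≤
        ((1 - η * m) * (1 + ‖u‖ ^ 2) + (η * m + 2 * η * K)) ^ (p / 2) :=
      Real.rpow_le_rpow (by positivity) h1 hq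
    have h1m : (0:ℝ) < 1 - η * m := by linarith
    have huns : (0:ℝ) ≤ 1 + ‖u‖ ^ 2 := by positivity
    have hsplit1 : ((1 - η * m) * (1 + ‖u‖ ^ 2) + (η * m + 2 * η * K)) ^ (p / 2) ≤
        ((1 - η * m) * (1 + ‖u‖ ^ 2)) ^ (p / 2) + (η * m + 2 * η * K) ^ (p / 2) :=
      my_rpow_add_le (mul_nonneg h1m.le huns)
        (by nlinarith) hq hq1
    have hsplit2 : (η * m + 2 * η * K) ^ (p / 2) ≤ (η * m) ^ (p / 2) + (2 * η * K) ^ (p / 2) :=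
      my_rpow_add_le (by positivity) (by positivity) hq hq1
    have hfac : ((1 - η * m) * (1 + ‖u‖ ^ 2)) ^ (p / 2) =
        (1 - η * m) ^ (p / 2) * (1 + ‖u‖ ^ 2) ^ (p / 2) :=
      Real.mul_rpow h1m.le huns
    have hbern : (1 - η * m) ^ (p / 2) ≤ 1 - η * m * p / 2 := by
      have := rpow_one_add_le_one_add_mul_self (s := -(η * m)) (by linarith) hq hq1
      rw [← sub_eq_add_neg] at this
      calc (1 - η * m) ^ (p / 2) ≤ 1 + p / 2 * (-(η * m)) := this
        _ = 1 - η * m * p / 2 := by ring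
    have hsm : (η * m) ^ (p / 2) ≤ 1 := by
      apply Real.rpow_le_one (by positivity) hηm.le hq
    have hVnn : (0:ℝ) ≤ (1 + ‖u‖ ^ 2) ^ (p / 2) := by positivity
    calc (1 + ‖u - η • G‖ ^ 2) ^ (p / 2)
        ≤ ((1 - η * m) * (1 + ‖u‖ ^ 2)) ^ (p / 2) + (η * m + 2 * η * K) ^ (p / 2) :=
          hmono.trans hsplit1
      _ ≤ (1 - η * m) ^ (p / 2) * (1 + ‖u‖ ^ 2) ^ (p / 2)
            + ((η * m) ^ (p / 2) + (2 * η * K) ^ (p / 2)) := by rw [hfac]; gcongr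
      _ ≤ (1 - η * m * p / 2) * (1 + ‖u‖ ^ 2) ^ (p / 2) + (1 + (2 * η * K) ^ (p / 2)) := by
          gcongr
      _ = (1 - η * m * p / 2) * (1 + ‖u‖ ^ 2) ^ (p / 2) + 1 + (2 * η * K) ^ (p / 2) := by ring
  -- integrate
  have hintg : Integrable (fun ω => (1 + ‖u - η • G‖ ^ 2) ^ (p / 2) + σ ^ p * ‖ξ ω‖ ^ p) μ :=
    (integrable_const _).add (hint.const_mul _)
  have hle : ∫ ω, (1 + ‖θ - η • G + σ • ξ ω - ϑstar‖ ^ 2) ^ (p / 2) ∂μ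
      ≤ ∫ ω, ((1 + ‖u - η • G‖ ^ 2) ^ (p / 2) + σ ^ p * ‖ξ ω‖ ^ p) ∂μ := by
    apply integral_mono_of_nonneg
    · filter_upwards with ω
      positivity
    · exact hintg
    · filter_upwards with ω using hpt ω
  have heq : ∫ ω, ((1 + ‖u - η • G‖ ^ 2) ^ (p / 2) + σ ^ p * ‖ξ ω‖ ^ p) ∂μ
      = (1 + ‖u - η • G‖ ^ 2) ^ (p / 2) + σ ^ p * ∫ ω, ‖ξ ω‖ ^ p ∂μ := by
    rw [integral_add (integrable_const _) (hint.const_mul _), integral_const,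
      integral_const_mul, probReal_univ, smul_eq_mul, one_mul]
  have hInn : σ ^ p * ∫ ω, ‖ξ ω‖ ^ p ∂μ = σ ^ p * ∫ ω, ‖ξ ω‖ ^ p ∂μ := rfl
  calc ∫ ω, (1 + ‖θ - η • G + σ • ξ ω - ϑstar‖ ^ 2) ^ (p / 2) ∂μ
      ≤ (1 + ‖u - η • G‖ ^ 2) ^ (p / 2) + σ ^ p * ∫ ω, ‖ξ ω‖ ^ p ∂μ := heq ▸ hle
    _ ≤ ((1 - η * m * p / 2) * (1 + ‖u‖ ^ 2) ^ (p / 2) + 1 + (2 * η * K) ^ (p / 2))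
          + σ ^ p * ∫ ω, ‖ξ ω‖ ^ p ∂μ := by
        exact add_le_add hdet le_rfl
    _ = (1 - η * m * p / 2) * (1 + ‖u‖ ^ 2) ^ (p / 2)
          + 1 + (2 * η * K) ^ (p / 2) + σ ^ p * ∫ ω, ‖ξ ω‖ ^ p ∂μ := by ring
end

section
/- Suppose Assumptions 1, 2 and 3 hold, let X ∈ 𝒳ⁿ be a dataset, let Ω ⊆ {1,…,n} be any nonempty subset, let p ∈ (0,1], let 0 < η < min(m/K₁², 1/m), let σ > 0, and let ξ be a random vector in ℝ^d with 𝔼‖ξ‖^p < ∞. Then for every θ ∈ ℝ^d, 𝔼[V_p(θ − η ∇F_Ω(θ, X) + σξ)] ≤ (1 − ηmp/2) V_p(θ) + 1 + (2ηK)^{p/2} + σ^p 𝔼‖ξ‖^p. -/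
open scoped BigOperators RealInnerProductSpace NNReal
open MeasureTheory

private lemma rpow_add_le_add_rpow_real {a b q : ℝ} (ha : 0 ≤ a) (hb : 0 ≤ b)
    (hq0 : 0 ≤ q) (hq1 : q ≤ 1) : (a + b) ^ q ≤ a ^ q + b ^ q := by
  have h := NNReal.rpow_add_le_add_rpow a.toNNReal b.toNNReal hq0 hq1
  have e : ((a.toNNReal + b.toNNReal : ℝ≥0) : ℝ) = a + b := by
    simp [Real.coe_toNNReal _ ha, Real.coe_toNNReal _ hb]
  calc (a + b) ^ q = (((a.toNNReal + b.toNNReal) ^ q : ℝ≥0) : ℝ) := by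
        rw [NNReal.coe_rpow, e]
    _ ≤ ((a.toNNReal ^ q + b.toNNReal ^ q : ℝ≥0) : ℝ) := by exact_mod_cast h
    _ = a ^ q + b ^ q := by
        push_cast [NNReal.coe_rpow]
        rw [Real.coe_toNNReal _ ha, Real.coe_toNNReal _ hb]

private lemma bernoulli_le_real {x q : ℝ} (hx1 : x ≤ 1) (hq0 : 0 ≤ q) (hq1 : q ≤ 1) :
    (1 - x) ^ q ≤ 1 - q * x := by
  have := rpow_one_add_le_one_add_mul_self (s := -x) (by linarith) hq0 hq1
  simpa [sub_eq_add_neg, mul_neg] using this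

set_option maxHeartbeats 1000000 in
/-- Under Assumptions 1, 2 and 3, for any nonempty minibatch `S`,
`p ∈ (0,1]`, `0 < η < min(m/K₁², 1/m)`, `σ > 0` and a random vector `ξ` with
`𝔼‖ξ‖^p < ∞`, the Lyapunov function `V_p(θ) = (1 + ‖θ - ϑ⋆‖²)^{p/2}` satisfies a
Foster–Lyapunov drift condition along one noisy SGD step. -/
theorem lyapunov_drift_sgd
    {d : ℕ} {H : Type*} [NormedAddCommGroup H] [InnerProductSpace ℝ H]
    (𝒳 : Set H) (f : EuclideanSpace ℝ (Fin d) → H → ℝ)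
    (K₁ K₂ : ℝ) (hK₁ : 0 < K₁) (hK₂ : 0 < K₂)
    (hdiff : ∀ x ∈ 𝒳, Differentiable ℝ (fun θ => f θ x))
    (hA1 : ∀ (θ θ' : EuclideanSpace ℝ (Fin d)), ∀ x ∈ 𝒳, ∀ x' ∈ 𝒳,
      ‖gradient (fun ϑ => f ϑ x) θ - gradient (fun ϑ => f ϑ x') θ'‖ ≤
        K₁ * ‖θ - θ'‖ + K₂ * ‖x - x'‖ * (‖θ‖ + ‖θ'‖ + 1))
    (B m K : ℝ) (hB : 0 < B) (hm : 0 < m) (hK : 0 < K)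
    (hA2a : ∀ x ∈ 𝒳, ‖gradient (fun ϑ => f ϑ x) 0‖ ≤ B)
    (hA2b : ∀ (θ₁ θ₂ : EuclideanSpace ℝ (Fin d)), ∀ x ∈ 𝒳,
      m * ‖θ₁ - θ₂‖ ^ 2 - K ≤
        ⟪gradient (fun ϑ => f ϑ x) θ₁ - gradient (fun ϑ => f ϑ x) θ₂, θ₁ - θ₂⟫)
    (ϑstar : EuclideanSpace ℝ (Fin d))
    (hA3 : ∀ x ∈ 𝒳, gradient (fun ϑ => f ϑ x) ϑstar = 0)
    {n : ℕ} (hn : 0 < n) (X : Fin n → H) (hX : ∀ i, X i ∈ 𝒳)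
    (S : Finset (Fin n)) (hS : S.Nonempty)
    (p : ℝ) (hp0 : 0 < p) (hp1 : p ≤ 1)
    (η : ℝ) (hη0 : 0 < η) (hη : η < min (m / K₁ ^ 2) (1 / m))
    (σ : ℝ) (hσ : 0 < σ)
    {Ω : Type*} [MeasurableSpace Ω] (μ : Measure Ω) [IsProbabilityMeasure μ]
    (ξ : Ω → EuclideanSpace ℝ (Fin d)) (hξ : Measurable ξ)
    (hint : Integrable (fun ω => ‖ξ ω‖ ^ p) μ)
    (θ : EuclideanSpace ℝ (Fin d)) :
    ∫ ω, (1 + ‖θ - η • ((S.card : ℝ)⁻¹ • ∑ j ∈ S, gradient (fun ϑ => f ϑ (X j)) θ)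
            + σ • ξ ω - ϑstar‖ ^ 2) ^ (p / 2) ∂μ
      ≤ (1 - η * m * p / 2) * (1 + ‖θ - ϑstar‖ ^ 2) ^ (p / 2)
        + 1 + (2 * η * K) ^ (p / 2) + σ ^ p * ∫ ω, ‖ξ ω‖ ^ p ∂μ := by
  set δ := θ - ϑstar with hδ
  set G := (S.card : ℝ)⁻¹ • ∑ j ∈ S, gradient (fun ϑ => f ϑ (X j)) θ with hGdef
  have hq0 : (0:ℝ) < p / 2 := by linarith
  have hq1 : p / 2 ≤ 1 := by linarith
  have hηm : η * m < 1 := by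
    have h := lt_of_lt_of_le hη (min_le_right _ _)
    rw [lt_div_iff₀ hm] at h; linarith
  have hηK₁ : η * K₁ ^ 2 ≤ m := by
    have h := lt_of_lt_of_le hη (min_le_left _ _)
    rw [lt_div_iff₀ (by positivity)] at h; linarith
  have hNpos : (0:ℝ) < (S.card : ℝ) := by exact_mod_cast hS.card_pos
  -- per-sample gradient bounds
  have hgnorm : ∀ j, ‖gradient (fun ϑ => f ϑ (X j)) θ‖ ≤ K₁ * ‖δ‖ := by
    intro j
    have h1 := hA1 θ ϑstar (X j) (hX j) (X j) (hX j)
    rw [hA3 (X j) (hX j), sub_zero, sub_self, norm_zero] at h1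
    simpa using h1
  have hginner : ∀ j, m * ‖δ‖ ^ 2 - K ≤ ⟪gradient (fun ϑ => f ϑ (X j)) θ, δ⟫ := by
    intro j
    have h2 := hA2b θ ϑstar (X j) (hX j)
    rwa [hA3 (X j) (hX j), sub_zero] at h2
  -- averaged bounds
  have hGnorm : ‖G‖ ≤ K₁ * ‖δ‖ := by
    rw [hGdef, norm_smul]
    have h1 : ‖∑ j ∈ S, gradient (fun ϑ => f ϑ (X j)) θ‖ ≤ S.card • (K₁ * ‖δ‖) :=
      (norm_sum_le _ _).trans (Finset.sum_le_card_nsmul S _ _ fun j _ => hgnorm j)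
    rw [nsmul_eq_mul] at h1
    have : ‖((S.card : ℝ)⁻¹)‖ = (S.card : ℝ)⁻¹ := by
      rw [Real.norm_eq_abs, abs_of_pos (by positivity)]
    rw [this]
    calc ((S.card : ℝ))⁻¹ * ‖∑ j ∈ S, gradient (fun ϑ => f ϑ (X j)) θ‖
        ≤ (S.card : ℝ)⁻¹ * ((S.card : ℝ) * (K₁ * ‖δ‖)) := by
          apply mul_le_mul_of_nonneg_left h1 (by positivity)
      _ = K₁ * ‖δ‖ := by field_simp
  have hGinner : m * ‖δ‖ ^ 2 - K ≤ ⟪G, δ⟫ := by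
    rw [hGdef, real_inner_smul_left, sum_inner]
    have h1 : S.card • (m * ‖δ‖ ^ 2 - K) ≤ ∑ j ∈ S, ⟪gradient (fun ϑ => f ϑ (X j)) θ, δ⟫ :=
      Finset.card_nsmul_le_sum S _ _ fun j _ => hginner j
    rw [nsmul_eq_mul] at h1
    calc m * ‖δ‖ ^ 2 - K
        = (S.card : ℝ)⁻¹ * ((S.card : ℝ) * (m * ‖δ‖ ^ 2 - K)) := by field_simp
      _ ≤ (S.card : ℝ)⁻¹ * ∑ j ∈ S, ⟪gradient (fun ϑ => f ϑ (X j)) θ, δ⟫ :=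
          mul_le_mul_of_nonneg_left h1 (by positivity)
  clear_value δ G
  -- one-step contraction
  have hcontract : ‖δ - η • G‖ ^ 2 ≤ (1 - η * m) * ‖δ‖ ^ 2 + 2 * η * K := by
    have hexp : ‖δ - η • G‖ ^ 2 = ‖δ‖ ^ 2 - 2 * ⟪δ, η • G⟫ + ‖η • G‖ ^ 2 :=
      norm_sub_sq_real δ (η • G)
    have h1 : ⟪δ, η • G⟫ = η * ⟪G, δ⟫ := by
      rw [real_inner_smul_right, real_inner_comm]
    have h2 : ‖η • G‖ ^ 2 = η ^ 2 * ‖G‖ ^ 2 := by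
      rw [norm_smul, Real.norm_eq_abs, mul_pow, sq_abs]
    have hGsq : ‖G‖ ^ 2 ≤ (K₁ * ‖δ‖) ^ 2 :=
      pow_le_pow_left₀ (norm_nonneg G) hGnorm 2
    rw [h1, h2] at hexp
    have i1 : 2 * (η * (m * ‖δ‖ ^ 2 - K)) ≤ 2 * (η * ⟪G, δ⟫) := by
      have := mul_le_mul_of_nonneg_left hGinner (le_of_lt hη0)
      linarith
    have i2 : η ^ 2 * ‖G‖ ^ 2 ≤ η * m * ‖δ‖ ^ 2 := by
      have j1 := mul_le_mul_of_nonneg_left hGsq (sq_nonneg η)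
      have j2 := mul_le_mul_of_nonneg_right hηK₁
        (mul_nonneg (le_of_lt hη0) (sq_nonneg ‖δ‖))
      nlinarith [j1, j2]
    linarith [hexp, i1, i2]
  -- pointwise bound
  set C := (1 - η * m * p / 2) * (1 + ‖δ‖ ^ 2) ^ (p / 2) + 1 + (2 * η * K) ^ (p / 2) with hC
  have key : ∀ ω, (1 + ‖θ - η • G + σ • ξ ω - ϑstar‖ ^ 2) ^ (p / 2)
      ≤ C + σ ^ p * ‖ξ ω‖ ^ p := by
    intro ω
    set a := ‖δ - η • G‖ with ha
    set b := σ * ‖ξ ω‖ with hb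
    have ha0 : 0 ≤ a := norm_nonneg _
    have hb0 : 0 ≤ b := by positivity
    have hab : ‖θ - η • G + σ • ξ ω - ϑstar‖ ≤ a + b := by
      have e : θ - η • G + σ • ξ ω - ϑstar = (δ - η • G) + σ • ξ ω := by
        rw [hδ]; abel
      rw [e]
      refine (norm_add_le _ _).trans ?_
      rw [norm_smul, Real.norm_eq_abs, abs_of_pos hσ]
    set s := Real.sqrt (1 + a ^ 2) with hs
    have hs0 : 0 ≤ s := Real.sqrt_nonneg _
    have hssq : s ^ 2 = 1 + a ^ 2 := Real.sq_sqrt (by positivity)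
    have has : a ≤ s := by
      rw [hs]
      calc a = Real.sqrt (a ^ 2) := (Real.sqrt_sq ha0).symm
        _ ≤ Real.sqrt (1 + a ^ 2) := Real.sqrt_le_sqrt (by linarith)
    clear_value a b s
    have step1 : (1 + ‖θ - η • G + σ • ξ ω - ϑstar‖ ^ 2) ^ (p / 2) ≤ ((s + b) ^ 2) ^ (p / 2) := by
      apply Real.rpow_le_rpow (by positivity) _ (le_of_lt hq0)
      have h' : ‖θ - η • G + σ • ξ ω - ϑstar‖ ^ 2 ≤ (a + b) ^ 2 :=
        pow_le_pow_left₀ (norm_nonneg _) hab 2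
      nlinarith [h', hssq, has, hs0, hb0, ha0]
    have step2 : ((s + b) ^ 2) ^ (p / 2) = (s + b) ^ p := by
      have e : ((2:ℕ):ℝ) * (p / 2) = p := by push_cast; ring
      rw [← Real.rpow_natCast_mul (by positivity) 2 (p / 2), e]
    have step3 : (s + b) ^ p ≤ s ^ p + b ^ p :=
      rpow_add_le_add_rpow_real hs0 hb0 (le_of_lt hp0) hp1
    have step4 : s ^ p = (1 + a ^ 2) ^ (p / 2) := by
      rw [hs, Real.sqrt_eq_rpow, ← Real.rpow_mul (by positivity), one_div,
        inv_mul_eq_div]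
    have step5 : b ^ p = σ ^ p * ‖ξ ω‖ ^ p := by
      rw [hb]; exact Real.mul_rpow (le_of_lt hσ) (norm_nonneg _)
    have step6 : (1 + a ^ 2) ^ (p / 2) ≤ C := by
      have h1 : 1 + a ^ 2 ≤ (1 - η * m) * (1 + ‖δ‖ ^ 2) + (η * m + 2 * η * K) := by
        nlinarith [hcontract]
      have hnn1 : (0:ℝ) ≤ 1 - η * m := by linarith
      have hnn2 : (0:ℝ) ≤ η * m + 2 * η * K := by positivity
      calc (1 + a ^ 2) ^ (p / 2)
          ≤ ((1 - η * m) * (1 + ‖δ‖ ^ 2) + (η * m + 2 * η * K)) ^ (p / 2) :=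
            Real.rpow_le_rpow (by positivity) h1 (le_of_lt hq0)
        _ ≤ ((1 - η * m) * (1 + ‖δ‖ ^ 2)) ^ (p / 2) + (η * m + 2 * η * K) ^ (p / 2) :=
            rpow_add_le_add_rpow_real (by positivity) hnn2 (le_of_lt hq0) hq1
        _ ≤ ((1 - η * m) * (1 + ‖δ‖ ^ 2)) ^ (p / 2) + ((η * m) ^ (p / 2) + (2 * η * K) ^ (p / 2)) := by
            gcongr
            exact rpow_add_le_add_rpow_real (by positivity) (by positivity) (le_of_lt hq0) hq1
        _ ≤ (1 - η * m * p / 2) * (1 + ‖δ‖ ^ 2) ^ (p / 2) + (1 + (2 * η * K) ^ (p / 2)) := by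
            have e1 : ((1 - η * m) * (1 + ‖δ‖ ^ 2)) ^ (p / 2)
                = (1 - η * m) ^ (p / 2) * (1 + ‖δ‖ ^ 2) ^ (p / 2) :=
              Real.mul_rpow hnn1 (by positivity)
            have e2 : (1 - η * m) ^ (p / 2) ≤ 1 - (p / 2) * (η * m) :=
              bernoulli_le_real (le_of_lt hηm) (le_of_lt hq0) hq1
            have e3 : (η * m) ^ (p / 2) ≤ 1 :=
              Real.rpow_le_one (by positivity) (le_of_lt hηm) (le_of_lt hq0)
            have e4 : (0:ℝ) ≤ (1 + ‖δ‖ ^ 2) ^ (p / 2) := by positivity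
            have e5 : (1 - η * m) ^ (p / 2) * (1 + ‖δ‖ ^ 2) ^ (p / 2)
                ≤ (1 - (p / 2) * (η * m)) * (1 + ‖δ‖ ^ 2) ^ (p / 2) :=
              mul_le_mul_of_nonneg_right e2 e4
            rw [e1]
            have e6 : 1 - (p / 2) * (η * m) = 1 - η * m * p / 2 := by ring
            rw [e6] at e5
            linarith
        _ = C := by rw [hC]; ring
    calc (1 + ‖θ - η • G + σ • ξ ω - ϑstar‖ ^ 2) ^ (p / 2)
        ≤ (s + b) ^ p := by rw [← step2]; exact step1
      _ ≤ s ^ p + b ^ p := step3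
      _ = (1 + a ^ 2) ^ (p / 2) + σ ^ p * ‖ξ ω‖ ^ p := by rw [step4, step5]
      _ ≤ C + σ ^ p * ‖ξ ω‖ ^ p := by linarith [step6]
  -- integration
  have hint' : Integrable (fun ω => C + σ ^ p * ‖ξ ω‖ ^ p) μ :=
    (integrable_const C).add (hint.const_mul _)
  have hgmeas : Measurable fun ω => (1 + ‖θ - η • G + σ • ξ ω - ϑstar‖ ^ 2) ^ (p / 2) := by
    have h1 : Measurable fun ω => θ - η • G + σ • ξ ω - ϑstar :=
      (measurable_const.add (hξ.const_smul σ)).sub measurable_const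
    exact (measurable_const.add ((h1.norm).pow_const 2)).pow measurable_const
  have hgint : Integrable (fun ω => (1 + ‖θ - η • G + σ • ξ ω - ϑstar‖ ^ 2) ^ (p / 2)) μ := by
    refine hint'.mono' hgmeas.aestronglyMeasurable (ae_of_all _ fun ω => ?_)
    rw [Real.norm_eq_abs, abs_of_nonneg (by positivity)]
    exact key ω
  calc ∫ ω, (1 + ‖θ - η • G + σ • ξ ω - ϑstar‖ ^ 2) ^ (p / 2) ∂μ
      ≤ ∫ ω, (C + σ ^ p * ‖ξ ω‖ ^ p) ∂μ := integral_mono hgint hint' key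
    _ = C + σ ^ p * ∫ ω, ‖ξ ω‖ ^ p ∂μ := by
        rw [integral_add (integrable_const C) (hint.const_mul _), integral_const,
          integral_const_mul]
        simp
    _ = (1 - η * m * p / 2) * (1 + ‖δ‖ ^ 2) ^ (p / 2) + 1 + (2 * η * K) ^ (p / 2)
        + σ ^ p * ∫ ω, ‖ξ ω‖ ^ p ∂μ := by rw [hC]
end

section
/- Suppose Assumptions 1, 2 and 3 hold, let X ∈ 𝒳ⁿ be a dataset, let p ∈ [1, 2), let 0 < η ≤ min(m/(2K₁²), 1/m, 1), and define b(θ) := −∇F(θ, X). Then for every θ ∈ ℝ^d, ∫₀^η ⟨∇V_p(θ + r b(θ)), b(θ)⟩ dr ≤ −(mpη/2) V_p(θ) + η ( p(m/2 + K) + m(2K)^{p/2} ). -/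
open scoped BigOperators RealInnerProductSpace

set_option maxHeartbeats 1000000

/-- Under Assumptions 1, 2 and 3, for `p ∈ [1,2)`,
`0 < η ≤ min(m/(2K₁²), 1/m, 1)` and drift `b(θ) = -∇F(θ,X)`,
`∫₀^η ⟨∇V_p(θ + r b(θ)), b(θ)⟩ dr ≤ -(mpη/2) V_p(θ) + η(p(m/2 + K) + m(2K)^{p/2})`,
where `V_p(θ) = (1 + ‖θ - ϑ⋆‖²)^{p/2}` and
`∇V_p(θ) = p (1 + ‖θ - ϑ⋆‖²)^{(p-2)/2} (θ - ϑ⋆)`. -/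
theorem lyapunov_gradient_integral_bound
    {d : ℕ} {H : Type*} [NormedAddCommGroup H] [InnerProductSpace ℝ H]
    (𝒳 : Set H) (f : EuclideanSpace ℝ (Fin d) → H → ℝ)
    (K₁ K₂ : ℝ) (hK₁ : 0 < K₁) (hK₂ : 0 < K₂)
    (hdiff : ∀ x ∈ 𝒳, Differentiable ℝ (fun θ => f θ x))
    (hA1 : ∀ (θ θ' : EuclideanSpace ℝ (Fin d)), ∀ x ∈ 𝒳, ∀ x' ∈ 𝒳,
      ‖gradient (fun ϑ => f ϑ x) θ - gradient (fun ϑ => f ϑ x') θ'‖ ≤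
        K₁ * ‖θ - θ'‖ + K₂ * ‖x - x'‖ * (‖θ‖ + ‖θ'‖ + 1))
    (B m K : ℝ) (hB : 0 < B) (hm : 0 < m) (hK : 0 < K)
    (hA2a : ∀ x ∈ 𝒳, ‖gradient (fun ϑ => f ϑ x) 0‖ ≤ B)
    (hA2b : ∀ (θ₁ θ₂ : EuclideanSpace ℝ (Fin d)), ∀ x ∈ 𝒳,
      m * ‖θ₁ - θ₂‖ ^ 2 - K ≤
        ⟪gradient (fun ϑ => f ϑ x) θ₁ - gradient (fun ϑ => f ϑ x) θ₂, θ₁ - θ₂⟫)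
    (ϑstar : EuclideanSpace ℝ (Fin d))
    (hA3 : ∀ x ∈ 𝒳, gradient (fun ϑ => f ϑ x) ϑstar = 0)
    {n : ℕ} (hn : 0 < n) (X : Fin n → H) (hX : ∀ i, X i ∈ 𝒳)
    (p : ℝ) (hp1 : 1 ≤ p) (hp2 : p < 2)
    (η : ℝ) (hη0 : 0 < η) (hη : η ≤ min (m / (2 * K₁ ^ 2)) (min (1 / m) 1))
    (θ : EuclideanSpace ℝ (Fin d))
    (bθ : EuclideanSpace ℝ (Fin d))
    (hbθ : bθ = -((n : ℝ)⁻¹ • ∑ j : Fin n, gradient (fun ϑ => f ϑ (X j)) θ)) :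
    (∫ r in (0 : ℝ)..η,
        ⟪(p * (1 + ‖θ + r • bθ - ϑstar‖ ^ 2) ^ ((p - 2) / 2)) • (θ + r • bθ - ϑstar), bθ⟫)
      ≤ -(m * p * η / 2) * (1 + ‖θ - ϑstar‖ ^ 2) ^ (p / 2)
        + η * (p * (m / 2 + K) + m * (2 * K) ^ (p / 2)) := by
  have hn' : (0:ℝ) < n := by exact_mod_cast hn
  set u : EuclideanSpace ℝ (Fin d) := θ - ϑstar with hu
  set s : ℝ := ‖u‖ ^ 2 with hs
  have hs0 : 0 ≤ s := sq_nonneg _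
  -- constraints on η
  have hη1 : η ≤ 1 := le_trans hη (le_trans (min_le_right _ _) (min_le_right _ _))
  have hηm : m * η ≤ 1 := by
    have h1 : η ≤ 1 / m := le_trans hη (le_trans (min_le_right _ _) (min_le_left _ _))
    rw [le_div_iff₀ hm] at h1; linarith [h1]
  have hηK₁ : η * K₁ ^ 2 ≤ m / 2 := by
    have h1 : η ≤ m / (2 * K₁ ^ 2) := le_trans hη (min_le_left _ _)
    have h2 : 0 < 2 * K₁ ^ 2 := by positivity
    rw [le_div_iff₀ h2] at h1; linarith
  -- per-sample gradient facts
  have hgrad0 : ∀ j : Fin n, ‖gradient (fun ϑ => f ϑ (X j)) θ‖ ≤ K₁ * ‖u‖ := by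
    intro j
    have h := hA1 θ ϑstar (X j) (hX j) (X j) (hX j)
    rw [hA3 (X j) (hX j), sub_zero, sub_self, norm_zero, mul_zero, zero_mul, add_zero] at h
    exact h
  have hgradd : ∀ j : Fin n,
      m * s - K ≤ ⟪gradient (fun ϑ => f ϑ (X j)) θ, u⟫ := by
    intro j
    have h := hA2b θ ϑstar (X j) (hX j)
    rw [hA3 (X j) (hX j), sub_zero] at h
    exact h
  -- norm and dissipativity of bθ
  have hbn : ‖bθ‖ ≤ K₁ * ‖u‖ := by
    rw [hbθ, norm_neg, norm_smul]
    have h1 : ‖∑ j : Fin n, gradient (fun ϑ => f ϑ (X j)) θ‖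
        ≤ ∑ j : Fin n, ‖gradient (fun ϑ => f ϑ (X j)) θ‖ := norm_sum_le _ _
    have h2 : (∑ j : Fin n, ‖gradient (fun ϑ => f ϑ (X j)) θ‖)
        ≤ ∑ _j : Fin n, K₁ * ‖u‖ := Finset.sum_le_sum (fun j _ => hgrad0 j)
    have h3 : (∑ _j : Fin n, K₁ * ‖u‖) = (n : ℝ) * (K₁ * ‖u‖) := by
      rw [Finset.sum_const, Finset.card_univ, Fintype.card_fin, nsmul_eq_mul]
    have h4 : ‖((n:ℝ)⁻¹ : ℝ)‖ = (n:ℝ)⁻¹ := by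
      rw [Real.norm_eq_abs, abs_of_nonneg (by positivity)]
    rw [h4]
    calc (n:ℝ)⁻¹ * ‖∑ j : Fin n, gradient (fun ϑ => f ϑ (X j)) θ‖
        ≤ (n:ℝ)⁻¹ * ((n : ℝ) * (K₁ * ‖u‖)) := by
          apply mul_le_mul_of_nonneg_left _ (by positivity)
          rw [← h3]; exact le_trans h1 h2
      _ = K₁ * ‖u‖ := by field_simp
  have hb2 : ‖bθ‖ ^ 2 ≤ K₁ ^ 2 * s := by
    rw [hs]
    calc ‖bθ‖ ^ 2 ≤ (K₁ * ‖u‖) ^ 2 := pow_le_pow_left₀ (norm_nonneg bθ) hbn 2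
      _ = K₁ ^ 2 * ‖u‖ ^ 2 := by ring
  have hub : ⟪u, bθ⟫ ≤ K - m * s := by
    have hsum : (n:ℝ) * (m * s - K)
        ≤ ⟪∑ j : Fin n, gradient (fun ϑ => f ϑ (X j)) θ, u⟫ := by
      rw [sum_inner]
      calc (n:ℝ) * (m * s - K) = ∑ _j : Fin n, (m * s - K) := by
            rw [Finset.sum_const, Finset.card_univ, Fintype.card_fin, nsmul_eq_mul]
        _ ≤ ∑ j : Fin n, ⟪gradient (fun ϑ => f ϑ (X j)) θ, u⟫ :=
            Finset.sum_le_sum (fun j _ => hgradd j)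
    have : ⟪u, bθ⟫ = -((n:ℝ)⁻¹ * ⟪∑ j : Fin n, gradient (fun ϑ => f ϑ (X j)) θ, u⟫) := by
      rw [hbθ, real_inner_comm, inner_neg_left, real_inner_smul_left]
    rw [this]
    have h2 : (n:ℝ)⁻¹ * ((n:ℝ) * (m * s - K))
        ≤ (n:ℝ)⁻¹ * ⟪∑ j : Fin n, gradient (fun ϑ => f ϑ (X j)) θ, u⟫ :=
      mul_le_mul_of_nonneg_left hsum (by positivity)
    have h3 : (n:ℝ)⁻¹ * ((n:ℝ) * (m * s - K)) = m * s - K := by field_simp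
    linarith [h2, h3 ▸ h2]
  -- the constant on the right
  set Cc : ℝ := p * (m / 2 + K) + m * (2 * K) ^ (p / 2) with hCc
  set D : ℝ := -(m * p / 2) * (1 + s) ^ (p / 2) + Cc with hD
  -- pointwise bound on the integrand
  have key : ∀ r ∈ Set.Icc (0:ℝ) η,
      ⟪(p * (1 + ‖θ + r • bθ - ϑstar‖ ^ 2) ^ ((p - 2) / 2)) • (θ + r • bθ - ϑstar), bθ⟫
        ≤ D := by
    intro r hr
    obtain ⟨hr0, hrη⟩ := hr
    have hw : θ + r • bθ - ϑstar = u + r • bθ := by rw [hu]; abel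
    rw [hw]
    set w : EuclideanSpace ℝ (Fin d) := u + r • bθ with hwdef
    set t : ℝ := ‖w‖ ^ 2 with ht
    have ht0 : 0 ≤ t := sq_nonneg _
    have htexp : t = s + 2 * (r * ⟪u, bθ⟫) + r ^ 2 * ‖bθ‖ ^ 2 := by
      rw [ht, hwdef, hs, norm_add_sq_real, real_inner_smul_right, norm_smul,
        Real.norm_eq_abs, mul_pow, sq_abs]
    have hrb2 : r * ‖bθ‖ ^ 2 ≤ m / 2 * s := by
      have h1 : r * ‖bθ‖ ^ 2 ≤ η * ‖bθ‖ ^ 2 :=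
        mul_le_mul_of_nonneg_right hrη (sq_nonneg _)
      have h2 : η * ‖bθ‖ ^ 2 ≤ η * (K₁ ^ 2 * s) :=
        mul_le_mul_of_nonneg_left hb2 (le_of_lt hη0)
      have h3 : (η * K₁ ^ 2) * s ≤ (m / 2) * s := mul_le_mul_of_nonneg_right hηK₁ hs0
      have h4 : η * (K₁ ^ 2 * s) = (η * K₁ ^ 2) * s := by ring
      rw [h4] at h2
      linarith [h1, h2, h3]
    have hwb : ⟪w, bθ⟫ ≤ K - m / 2 * s := by
      have h1 : ⟪w, bθ⟫ = ⟪u, bθ⟫ + r * ‖bθ‖ ^ 2 := by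
        rw [hwdef, inner_add_left, real_inner_smul_left, real_inner_self_eq_norm_sq]
      rw [h1]
      linarith [hub, hrb2]
    have htub : t ≤ s + 2 * K := by
      have h1 : r ^ 2 * ‖bθ‖ ^ 2 ≤ r * (m / 2 * s) := by
        have : r ^ 2 * ‖bθ‖ ^ 2 = r * (r * ‖bθ‖ ^ 2) := by ring
        rw [this]
        exact mul_le_mul_of_nonneg_left hrb2 hr0
      have h2 : r * ⟪u, bθ⟫ ≤ r * (K - m * s) := mul_le_mul_of_nonneg_left hub hr0
      have hrK : r * K ≤ K := by
        have := mul_le_mul_of_nonneg_right (hrη.trans hη1) hK.le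
        linarith [this]
      have hrms : 0 ≤ r * (m * s) := mul_nonneg hr0 (mul_nonneg hm.le hs0)
      linarith [htexp, h1, h2, hrK, hrms]
    have hF0 : 0 < p * (1 + t) ^ ((p - 2) / 2) := by
      have : (0:ℝ) < (1 + t) ^ ((p - 2) / 2) := Real.rpow_pos_of_pos (by linarith) _
      positivity
    have hFsmul : ⟪(p * (1 + t) ^ ((p - 2) / 2)) • w, bθ⟫
        = (p * (1 + t) ^ ((p - 2) / 2)) * ⟪w, bθ⟫ := real_inner_smul_left _ _ _
    rw [hFsmul]
    have hstep1 : (p * (1 + t) ^ ((p - 2) / 2)) * ⟪w, bθ⟫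
        ≤ (p * (1 + t) ^ ((p - 2) / 2)) * (K - m / 2 * s) :=
      mul_le_mul_of_nonneg_left hwb hF0.le
    rcases le_or_gt 0 (K - m / 2 * s) with hA | hA
    · -- small ‖u‖ case
      have hFle : (1 + t) ^ ((p - 2) / 2) ≤ 1 :=
        Real.rpow_le_one_of_one_le_of_nonpos (by linarith) (by linarith)
      have h2 : (p * (1 + t) ^ ((p - 2) / 2)) * (K - m / 2 * s) ≤ p * (K - m / 2 * s) := by
        apply mul_le_mul_of_nonneg_right _ hA
        have h2x := mul_le_mul_of_nonneg_left hFle (show (0:ℝ) ≤ p by linarith)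
        rw [mul_one] at h2x
        exact h2x
      have h3 : (1 + s) ^ (p / 2) ≤ 1 + s := by
        calc (1 + s) ^ (p / 2) ≤ (1 + s) ^ (1:ℝ) :=
              Real.rpow_le_rpow_of_exponent_le (by linarith) (by linarith)
          _ = 1 + s := Real.rpow_one _
      have h4 : 0 ≤ m * (2 * K) ^ (p / 2) := by positivity
      rw [hD, hCc]
      have h5 : m * p / 2 * (1 + s) ^ (p / 2) ≤ m * p / 2 * (1 + s) :=
        mul_le_mul_of_nonneg_left h3 (by positivity)
      linarith [hstep1, h2, h5, h4]
    · -- large ‖u‖ case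
      set z : ℝ := 1 + s + 2 * K with hz
      have hz1 : (1:ℝ) ≤ z := by rw [hz]; linarith [hs0, hK.le]
      have hz2K : 2 * K ≤ z := by rw [hz]; linarith [hs0]
      have hz1s : 1 + s ≤ z := by rw [hz]; linarith [hK.le]
      have hzpos : (0:ℝ) < z := by linarith
      set e : ℝ := z ^ ((p - 2) / 2) with he
      have he0 : 0 ≤ e := (Real.rpow_pos_of_pos hzpos _).le
      have hFG : p * e ≤ p * (1 + t) ^ ((p - 2) / 2) := by
        apply mul_le_mul_of_nonneg_left _ (by linarith)
        rw [he]
        exact Real.rpow_le_rpow_of_nonpos (by linarith) (by rw [hz]; linarith [htub])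
          (by linarith)
      have hstep2 : (p * (1 + t) ^ ((p - 2) / 2)) * (K - m / 2 * s)
          ≤ (p * e) * (K - m / 2 * s) :=
        mul_le_mul_of_nonpos_right hFG (by linarith)
      -- algebraic identities
      have hez : e * z = z ^ (p / 2) := by
        rw [he, ← Real.rpow_add_one (ne_of_gt hzpos)]
        congr 1; ring
      have he1 : e ≤ 1 := Real.rpow_le_one_of_one_le_of_nonpos hz1 (by linarith)
      have heE : e ≤ (2 * K) ^ ((p - 2) / 2) :=
        Real.rpow_le_rpow_of_nonpos (by positivity) hz2K (by linarith)
      have hE2K : (2 * K) ^ ((p - 2) / 2) * (2 * K) = (2 * K) ^ (p / 2) := by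
        rw [← Real.rpow_add_one (by positivity : (2*K) ≠ 0)]
        congr 1; ring
      have hE0 : 0 ≤ (2 * K) ^ ((p - 2) / 2) := Real.rpow_nonneg (by positivity) _
      have hzp : (1 + s) ^ (p / 2) ≤ z ^ (p / 2) :=
        Real.rpow_le_rpow (by linarith) hz1s (by linarith)
      -- (p*e)*(K - m/2*s) = p*(K + m/2 + m*K)*e - (m*p/2)*(e*z)
      have hexpand : (p * e) * (K - m / 2 * s)
          = p * (K + m / 2 + m * K) * e - (m * p / 2) * (e * z) := by
        rw [hz]; ring
      rw [hD, hCc]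
      have hfin : p * (K + m / 2 + m * K) * e - (m * p / 2) * (e * z)
          ≤ -(m * p / 2) * (1 + s) ^ (p / 2) + (p * (m / 2 + K) + m * (2 * K) ^ (p / 2)) := by
        rw [hez]
        have t1 : p * (K + m / 2) * e ≤ p * (K + m / 2) := by
          have := mul_le_mul_of_nonneg_left he1 (by positivity : (0:ℝ) ≤ p * (K + m / 2))
          linarith [this]
        have t2 : p * (m * K) * e ≤ m * (2 * K) ^ (p / 2) := by
          have h2a : p * (m * K) * e ≤ p * (m * K) * ((2 * K) ^ ((p - 2) / 2)) := by
            apply mul_le_mul_of_nonneg_left heE (by positivity)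
          have h2b : p * (m * K) * ((2 * K) ^ ((p - 2) / 2)) = (p / 2) * m * ((2 * K) ^ ((p - 2) / 2) * (2 * K)) := by ring
          rw [h2b, hE2K] at h2a
          have h2c : (p / 2) * m * ((2 * K) ^ (p / 2)) ≤ m * (2 * K) ^ (p / 2) := by
            have hx0 : (0:ℝ) ≤ m * (2 * K) ^ (p / 2) :=
              mul_nonneg hm.le (Real.rpow_nonneg (by positivity) _)
            have h2d := mul_le_mul_of_nonneg_right (show p / 2 ≤ 1 by linarith) hx0
            rw [one_mul] at h2d
            have h2e : p / 2 * (m * (2 * K) ^ (p / 2)) = p / 2 * m * (2 * K) ^ (p / 2) := by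
              ring
            rw [h2e] at h2d
            exact h2d
          linarith
        have t3 : -(m * p / 2) * z ^ (p / 2) ≤ -(m * p / 2) * (1 + s) ^ (p / 2) := by
          have := mul_le_mul_of_nonneg_left hzp (by positivity : (0:ℝ) ≤ m * p / 2)
          linarith [this]
        linarith [t1, t2, t3]
      calc (p * (1 + t) ^ ((p - 2) / 2)) * ⟪w, bθ⟫
          ≤ (p * e) * (K - m / 2 * s) := le_trans hstep1 hstep2
        _ = p * (K + m / 2 + m * K) * e - (m * p / 2) * (e * z) := hexpand
        _ ≤ _ := hfin
  -- continuity / integrability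
  have hcont : Continuous fun r : ℝ =>
      ⟪(p * (1 + ‖θ + r • bθ - ϑstar‖ ^ 2) ^ ((p - 2) / 2)) • (θ + r • bθ - ϑstar), bθ⟫ := by
    have hw : Continuous fun r : ℝ => θ + r • bθ - ϑstar := by fun_prop
    have hbase : Continuous fun r : ℝ => 1 + ‖θ + r • bθ - ϑstar‖ ^ 2 := by fun_prop
    have hrpow : Continuous fun r : ℝ => (1 + ‖θ + r • bθ - ϑstar‖ ^ 2) ^ ((p - 2) / 2) := by
      apply hbase.rpow_const
      intro x
      left
      positivity
    have hsc : Continuous fun r : ℝ => p * (1 + ‖θ + r • bθ - ϑstar‖ ^ 2) ^ ((p - 2) / 2) :=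
      continuous_const.mul hrpow
    exact (hsc.smul hw).inner continuous_const
  have hint : IntervalIntegrable (fun r : ℝ =>
      ⟪(p * (1 + ‖θ + r • bθ - ϑstar‖ ^ 2) ^ ((p - 2) / 2)) • (θ + r • bθ - ϑstar), bθ⟫)
      MeasureTheory.volume 0 η := hcont.intervalIntegrable _ _
  have hmono := intervalIntegral.integral_mono_on (le_of_lt hη0) hint
    (intervalIntegrable_const : IntervalIntegrable (fun _ => D) MeasureTheory.volume 0 η) key
  have hconst : (∫ _r in (0:ℝ)..η, D) = η * D := by
    rw [intervalIntegral.integral_const, smul_eq_mul, sub_zero]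
  rw [hconst] at hmono
  calc (∫ r in (0 : ℝ)..η,
        ⟪(p * (1 + ‖θ + r • bθ - ϑstar‖ ^ 2) ^ ((p - 2) / 2)) • (θ + r • bθ - ϑstar), bθ⟫)
      ≤ η * D := hmono
    _ = -(m * p * η / 2) * (1 + s) ^ (p / 2) + η * Cc := by rw [hD]; ring
    _ = _ := by rw [hCc, hs, hu]
end

section
/- Let d ≥ 1, α ∈ (1,2), p ∈ [1, α), x ∈ ℝ^d, and let V_p : ℝ^d → ℝ be V_p(θ) = (1 + ‖θ − x‖²)^{p/2}. For θ ∈ ℝ^d define I₁(θ) = ∫_{‖y‖<1} ( ∫₀¹ ∫₀^r ⟨∇²V_p(θ + s y) y, y⟩ ds dr ) ‖y‖^{−(α+d)} dy and I₂(θ) = ∫_{‖y‖≥1} ( ∫₀¹ ⟨∇V_p(θ + r y), y⟩ dr ) ‖y‖^{−(α+d)} dy, where ∇²V_p denotes the Hessian of V_p. Then, with C_{d,α} := α 2^{α−1} π^{−d/2} Γ((d+α)/2)/Γ(1 − α/2) and 𝖢 := α 2^{α} Γ((d+α)/2)/(Γ(1 − α/2) Γ(d/2)), it holds for every θ ∈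 ℝ^d that |C_{d,α}(I₁(θ) + I₂(θ))| ≤ 𝖢 ( p(√d + 2)/(2 − α) + (p/(α − 1)) ‖θ − x‖^{p−1} + 1/(α − p) ). -/
open MeasureTheory Real Set

/-- Subadditivity of `rpow` with exponent in `[0,1]` on nonneg reals. -/
lemma my_rpow_add_le_add_rpow {a b q : ℝ} (ha : 0 ≤ a) (hb : 0 ≤ b) (h0 : 0 ≤ q) (h1 : q ≤ 1) :
    (a + b) ^ q ≤ a ^ q + b ^ q := by
  have h := NNReal.rpow_add_le_add_rpow a.toNNReal b.toNNReal h0 h1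
  have := NNReal.coe_le_coe.2 h
  push_cast [NNReal.coe_rpow] at this
  rwa [Real.coe_toNNReal a ha, Real.coe_toNNReal b hb] at this

lemma my_deriv_bound {p : ℝ} (hp1 : 1 ≤ p) (hp2 : p ≤ 2) {s : ℝ} (hs : 0 ≤ s) :
    p * s * (1 + s ^ 2) ^ (p / 2 - 1) ≤ p * s ^ (p - 1) := by
  have hp0 : 0 < p := by linarith
  rcases eq_or_lt_of_le hs with h | h
  · rw [← h]
    simp only [mul_zero, zero_mul]
    positivity
  · have h1 : (1 + s ^ 2) ^ (p / 2 - 1) ≤ (s ^ 2) ^ (p / 2 - 1) := by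
      apply Real.rpow_le_rpow_of_nonpos (by positivity) (by nlinarith)
      linarith
    have h2 : (s ^ 2 : ℝ) ^ (p / 2 - 1) = s ^ (p - 2) := by
      rw [← Real.rpow_natCast s 2, ← Real.rpow_mul hs]
      congr 1
      push_cast
      ring
    have h3 : s * s ^ (p - 2) = s ^ (p - 1) := by
      nth_rewrite 1 [← Real.rpow_one s]
      rw [← Real.rpow_add h]
      ring_nf
    calc p * s * (1 + s ^ 2) ^ (p / 2 - 1) ≤ p * s * (s ^ 2) ^ (p / 2 - 1) := by
          apply mul_le_mul_of_nonneg_left h1 (by positivity)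
      _ = p * s ^ (p - 1) := by rw [h2, mul_assoc, h3]

lemma my_hasDerivAt {p : ℝ} (s : ℝ) :
    HasDerivAt (fun s : ℝ => (1 + s ^ 2) ^ (p / 2)) (p * s * (1 + s ^ 2) ^ (p / 2 - 1)) s := by
  have hpos : (0:ℝ) < 1 + s ^ 2 := by positivity
  have h1 : HasDerivAt (fun s : ℝ => 1 + s ^ 2) (2 * s) s := by
    simpa using (hasDerivAt_pow 2 s).const_add 1
  have h2 := (Real.hasDerivAt_rpow_const (p := p / 2) (Or.inl hpos.ne')).comp s h1
  refine h2.congr_deriv ?_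
  ring

lemma my_deriv_cont {p : ℝ} : Continuous (fun s : ℝ => p * s * (1 + s ^ 2) ^ (p / 2 - 1)) := by
  apply Continuous.mul (by fun_prop)
  apply Continuous.rpow_const (by fun_prop)
  intro s
  left
  positivity

/-- Key 1-D increment bound. -/
lemma my_incr_bound {p : ℝ} (hp1 : 1 ≤ p) (hp2 : p < 2) {a b t : ℝ} (ha : 0 ≤ a) (hb : 0 ≤ b)
    (ht : 0 ≤ t) (hab : |b - a| ≤ t) :
    |(1 + b ^ 2) ^ (p / 2) - (1 + a ^ 2) ^ (p / 2)| ≤ p * a ^ (p - 1) * t + t ^ p := by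
  have hp0 : 0 < p := by linarith
  set h : ℝ → ℝ := fun s => (1 + s ^ 2) ^ (p / 2) with hh
  set h' : ℝ → ℝ := fun s => p * s * (1 + s ^ 2) ^ (p / 2 - 1) with hh'
  have hint : ∀ u v : ℝ, h v - h u = ∫ s in u..v, h' s :=
    fun u v => (intervalIntegral.integral_eq_sub_of_hasDerivAt
      (fun s _ => my_hasDerivAt s) (my_deriv_cont.intervalIntegrable u v)).symm
  have hmono : ∀ u v : ℝ, 0 ≤ u → u ≤ v → h u ≤ h v := by
    intro u v hu huv
    apply Real.rpow_le_rpow (by positivity) (by nlinarith) (by positivity)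
  rcases le_total a b with hle | hle
  · -- case a ≤ b
    rw [abs_of_nonneg (by linarith [hmono a b ha hle])]
    have hba : b - a ≤ t := by rwa [abs_of_nonneg (by linarith)] at hab
    have key : h b - h a ≤ p * a ^ (p - 1) * (b - a) + (b - a) ^ p := by
      rw [hint a b]
      have hb1 : ∀ s ∈ Set.Icc a b, h' s ≤ p * a ^ (p - 1) + p * (s - a) ^ (p - 1) := by
        intro s hs
        have hs0 : 0 ≤ s := le_trans ha hs.1
        refine le_trans (my_deriv_bound hp1 (by linarith) hs0) ?_
        have : s ^ (p - 1) ≤ a ^ (p - 1) + (s - a) ^ (p - 1) := by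
          have := my_rpow_add_le_add_rpow ha (by linarith [hs.1] : (0:ℝ) ≤ s - a)
            (by linarith : (0:ℝ) ≤ p - 1) (by linarith : p - 1 ≤ 1)
          simpa using this
        nlinarith
      have hgint : IntervalIntegrable
          (fun s => p * a ^ (p - 1) + p * (s - a) ^ (p - 1)) volume a b := by
        apply IntervalIntegrable.add (intervalIntegrable_const)
        apply IntervalIntegrable.const_mul
        have := (intervalIntegral.intervalIntegrable_rpow' (a := 0) (b := b - a)
          (r := p - 1) (by linarith)).comp_sub_right a
        simpa [zero_add, sub_add_cancel] using this
      calc ∫ s in a..b, h' s ≤ ∫ s in a..b, (p * a ^ (p - 1) + p * (s - a) ^ (p - 1)) := by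
            apply intervalIntegral.integral_mono_on hle
              (my_deriv_cont.intervalIntegrable a b) hgint hb1
        _ = p * a ^ (p - 1) * (b - a) + (b - a) ^ p := by
            rw [intervalIntegral.integral_add intervalIntegrable_const
              (by
                apply IntervalIntegrable.const_mul
                have := (intervalIntegral.intervalIntegrable_rpow' (a := 0) (b := b - a)
                  (r := p - 1) (by linarith)).comp_sub_right a
                simpa [zero_add, sub_add_cancel] using this)]
            rw [intervalIntegral.integral_const, intervalIntegral.integral_const_mul,
              intervalIntegral.integral_comp_sub_right (fun s => s ^ (p - 1)) a]
            simp only [sub_self]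
            rw [integral_rpow (Or.inl (by linarith))]
            rw [Real.zero_rpow (by linarith : p - 1 + 1 ≠ 0)]
            have : p - 1 + 1 = p := by ring
            rw [this]
            field_simp
            ring
    refine le_trans key ?_
    have h1 : p * a ^ (p - 1) * (b - a) ≤ p * a ^ (p - 1) * t :=
      mul_le_mul_of_nonneg_left hba (by positivity)
    have h2 : (b - a) ^ p ≤ t ^ p := Real.rpow_le_rpow (by linarith) hba (by linarith)
    linarith
  · -- case b ≤ a
    rw [abs_sub_comm, abs_of_nonneg (by linarith [hmono b a hb hle])]
    have hba : a - b ≤ t := by rwa [abs_of_nonpos (by linarith), neg_sub] at hab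
    have key : h a - h b ≤ p * a ^ (p - 1) * (a - b) := by
      rw [hint b a]
      have hb1 : ∀ s ∈ Set.Icc b a, h' s ≤ p * a ^ (p - 1) := by
        intro s hs
        have hs0 : 0 ≤ s := le_trans hb hs.1
        refine le_trans (my_deriv_bound hp1 (by linarith) hs0) ?_
        apply mul_le_mul_of_nonneg_left _ hp0.le
        exact Real.rpow_le_rpow hs0 hs.2 (by linarith)
      calc ∫ s in b..a, h' s ≤ ∫ s in b..a, p * a ^ (p - 1) := by
            apply intervalIntegral.integral_mono_on hle
              (my_deriv_cont.intervalIntegrable b a) intervalIntegrable_const hb1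
        _ = p * a ^ (p - 1) * (a - b) := by
            rw [intervalIntegral.integral_const, smul_eq_mul]; ring
    have ht2 : (0:ℝ) ≤ t ^ p := Real.rpow_nonneg ht p
    have : p * a ^ (p - 1) * (a - b) ≤ p * a ^ (p - 1) * t :=
      mul_le_mul_of_nonneg_left hba (by positivity)
    linarith

noncomputable def myInner {d : ℕ} :
    EuclideanSpace ℝ (Fin d) →L[ℝ] EuclideanSpace ℝ (Fin d) →L[ℝ] ℝ := innerSL ℝ

@[simp] lemma myInner_apply {d : ℕ} (y z : EuclideanSpace ℝ (Fin d)) :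
    myInner y z = inner ℝ y z := rfl

section Derivs

variable {d : ℕ} (p : ℝ) (x : EuclideanSpace ℝ (Fin d))

local notation "E" => EuclideanSpace ℝ (Fin d)

/-- First derivative of the Lyapunov function. -/
lemma my_hasFDerivAt_V (ϑ : E) :
    HasFDerivAt (fun ϑ : E => (1 + ‖ϑ - x‖ ^ 2) ^ (p / 2))
      ((p * (1 + ‖ϑ - x‖ ^ 2) ^ (p / 2 - 1)) • (innerSL ℝ (ϑ - x))) ϑ := by
  have hpos : (0:ℝ) < 1 + ‖ϑ - x‖ ^ 2 := by positivity
  have h1 : HasFDerivAt (fun ϑ : E => ϑ - x) (ContinuousLinearMap.id ℝ E) ϑ :=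
    (hasFDerivAt_id ϑ).sub_const x
  have h2 : HasFDerivAt (fun ϑ : E => ‖ϑ - x‖ ^ 2)
      ((2:ℕ) • (innerSL ℝ (ϑ - x))) ϑ := by
    have := h1.norm_sq
    simpa using this
  have h3 : HasFDerivAt (fun ϑ : E => 1 + ‖ϑ - x‖ ^ 2)
      ((2:ℕ) • (innerSL ℝ (ϑ - x))) ϑ := h2.const_add 1
  have h4 := (Real.hasDerivAt_rpow_const (x := 1 + ‖ϑ - x‖ ^ 2) (p := p / 2)
    (Or.inl hpos.ne')).comp_hasFDerivAt ϑ h3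
  refine h4.congr_fderiv ?_
  ext y
  simp only [ContinuousLinearMap.smul_apply, smul_eq_mul, ContinuousLinearMap.coe_smul',
    Pi.smul_apply, nsmul_eq_mul]
  push_cast
  ring

lemma my_fderiv_V (ϑ : E) :
    fderiv ℝ (fun ϑ : E => (1 + ‖ϑ - x‖ ^ 2) ^ (p / 2)) ϑ
      = (p * (1 + ‖ϑ - x‖ ^ 2) ^ (p / 2 - 1)) • (innerSL ℝ (ϑ - x)) :=
  (my_hasFDerivAt_V p x ϑ).fderiv

/-- Derivative of the scalar coefficient. -/
lemma my_hasFDerivAt_c (ϑ : E) :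
    HasFDerivAt (fun ϑ : E => p * (1 + ‖ϑ - x‖ ^ 2) ^ (p / 2 - 1))
      ((p * (p - 2) * (1 + ‖ϑ - x‖ ^ 2) ^ (p / 2 - 2)) • (innerSL ℝ (ϑ - x))) ϑ := by
  have hpos : (0:ℝ) < 1 + ‖ϑ - x‖ ^ 2 := by positivity
  have h1 : HasFDerivAt (fun ϑ : E => ϑ - x) (ContinuousLinearMap.id ℝ E) ϑ :=
    (hasFDerivAt_id ϑ).sub_const x
  have h2 : HasFDerivAt (fun ϑ : E => ‖ϑ - x‖ ^ 2)
      ((2:ℕ) • (innerSL ℝ (ϑ - x))) ϑ := by simpa using h1.norm_sq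
  have h3 : HasFDerivAt (fun ϑ : E => 1 + ‖ϑ - x‖ ^ 2)
      ((2:ℕ) • (innerSL ℝ (ϑ - x))) ϑ := h2.const_add 1
  have h4 := ((Real.hasDerivAt_rpow_const (x := 1 + ‖ϑ - x‖ ^ 2) (p := p / 2 - 1)
    (Or.inl hpos.ne')).comp_hasFDerivAt ϑ h3).const_mul p
  refine h4.congr_fderiv ?_
  ext y
  simp only [ContinuousLinearMap.smul_apply, smul_eq_mul, ContinuousLinearMap.coe_smul',
    Pi.smul_apply, nsmul_eq_mul]
  push_cast
  have : p / 2 - 1 - 1 = p / 2 - 2 := by ring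
  rw [this]
  ring

/-- Derivative of the continuous-linear-map part. -/
lemma my_hasFDerivAt_L (ϑ : E) :
    HasFDerivAt (fun ϑ : E => innerSL ℝ (ϑ - x)) ((myInner (d := d))) ϑ := by
  have h1 : HasFDerivAt (fun ϑ : E => ϑ - x) (ContinuousLinearMap.id ℝ E) ϑ :=
    (hasFDerivAt_id ϑ).sub_const x
  have h2 := ((myInner (d := d))).hasFDerivAt.comp ϑ h1
  rw [ContinuousLinearMap.comp_id] at h2
  exact h2

/-- Hessian bound. -/
lemma my_hessian_bound (hp1 : 1 ≤ p) (hp2 : p ≤ 2) (ϑ y : E) :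
    |iteratedFDeriv ℝ 2 (fun ϑ : E => (1 + ‖ϑ - x‖ ^ 2) ^ (p / 2)) ϑ ![y, y]|
      ≤ 2 * p * ‖y‖ ^ 2 := by
  have hp0 : (0:ℝ) < p := by linarith
  have hpos : (0:ℝ) < 1 + ‖ϑ - x‖ ^ 2 := by positivity
  have hD : HasFDerivAt (fun ϑ : E => fderiv ℝ (fun ϑ : E => (1 + ‖ϑ - x‖ ^ 2) ^ (p / 2)) ϑ)
      ((p * (1 + ‖ϑ - x‖ ^ 2) ^ (p / 2 - 1)) • (myInner (d := d))
        + ((p * (p - 2) * (1 + ‖ϑ - x‖ ^ 2) ^ (p / 2 - 2)) • (innerSL ℝ (ϑ - x))).smulRight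
            (innerSL ℝ (ϑ - x))) ϑ := by
    have heq : (fun ϑ : E => fderiv ℝ (fun ϑ : E => (1 + ‖ϑ - x‖ ^ 2) ^ (p / 2)) ϑ)
        = fun ϑ : E => (p * (1 + ‖ϑ - x‖ ^ 2) ^ (p / 2 - 1)) • (innerSL ℝ (ϑ - x)) :=
      funext fun ϑ => my_fderiv_V p x ϑ
    rw [heq]
    exact (my_hasFDerivAt_c p x ϑ).smul (my_hasFDerivAt_L x ϑ)
  rw [iteratedFDeriv_two_apply, hD.fderiv]
  simp only [Matrix.cons_val_zero, Matrix.cons_val_one, Matrix.head_cons,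
    ContinuousLinearMap.add_apply, ContinuousLinearMap.smul_apply,
    ContinuousLinearMap.smulRight_apply, ContinuousLinearMap.coe_smul', Pi.smul_apply,
    smul_eq_mul, innerSL_apply_apply, myInner_apply]
  rw [real_inner_self_eq_norm_sq y]
  set w : E := ϑ - x with hw
  set A : ℝ := (1 + ‖w‖ ^ 2) ^ (p / 2 - 1) with hA
  set B : ℝ := (1 + ‖w‖ ^ 2) ^ (p / 2 - 2) with hB
  set I : ℝ := inner ℝ w y with hI
  have hA0 : (0:ℝ) ≤ A := Real.rpow_nonneg (by positivity) _
  have hB0 : (0:ℝ) ≤ B := Real.rpow_nonneg (by positivity) _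
  have hA1 : A ≤ 1 :=
    Real.rpow_le_one_of_one_le_of_nonpos (by nlinarith [sq_nonneg ‖w‖]) (by linarith)
  have e2 : B * ‖w‖ ^ 2 ≤ 1 := by
    have h1 : B * ‖w‖ ^ 2 ≤ B * (1 + ‖w‖ ^ 2) :=
      mul_le_mul_of_nonneg_left (by nlinarith [sq_nonneg ‖w‖]) hB0
    have h2 : B * (1 + ‖w‖ ^ 2) = A := by
      rw [hA, hB]
      nth_rewrite 2 [← Real.rpow_one (1 + ‖w‖ ^ 2)]
      rw [← Real.rpow_add (by positivity)]
      ring_nf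
    linarith
  have hIsq : I * I ≤ ‖w‖ ^ 2 * ‖y‖ ^ 2 := by
    have h1 : |I| * |I| ≤ (‖w‖ * ‖y‖) * (‖w‖ * ‖y‖) :=
      mul_self_le_mul_self (abs_nonneg _) (abs_real_inner_le_norm w y)
    calc I * I = |I| * |I| := (abs_mul_abs_self I).symm
      _ ≤ (‖w‖ * ‖y‖) * (‖w‖ * ‖y‖) := h1
      _ = ‖w‖ ^ 2 * ‖y‖ ^ 2 := by ring
  have key0 : (0:ℝ) ≤ B * (I * I) := mul_nonneg hB0 (mul_self_nonneg I)
  have key1 : B * (I * I) ≤ ‖y‖ ^ 2 := by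
    calc B * (I * I) ≤ B * (‖w‖ ^ 2 * ‖y‖ ^ 2) := mul_le_mul_of_nonneg_left hIsq hB0
      _ = (B * ‖w‖ ^ 2) * ‖y‖ ^ 2 := by ring
      _ ≤ 1 * ‖y‖ ^ 2 := mul_le_mul_of_nonneg_right e2 (sq_nonneg _)
      _ = ‖y‖ ^ 2 := one_mul _
  have u1 : p * A * ‖y‖ ^ 2 ≤ p * ‖y‖ ^ 2 := by
    nlinarith [mul_nonneg (mul_nonneg hp0.le (sub_nonneg.2 hA1)) (sq_nonneg ‖y‖)]
  have u0 : (0:ℝ) ≤ p * A * ‖y‖ ^ 2 := by positivity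
  rw [abs_le]
  constructor
  · have t2 : p * (p - 2) * ‖y‖ ^ 2 ≤ p * (p - 2) * (B * (I * I)) := by
      apply mul_le_mul_of_nonpos_left key1 (by nlinarith)
    nlinarith [sq_nonneg ‖y‖]
  · have t2 : p * (p - 2) * (B * (I * I)) ≤ 0 :=
      mul_nonpos_of_nonpos_of_nonneg (by nlinarith) key0
    nlinarith [sq_nonneg ‖y‖]

end Derivs

section FTC

variable {d : ℕ} (p : ℝ) (x θ : EuclideanSpace ℝ (Fin d))

local notation "E" => EuclideanSpace ℝ (Fin d)

lemma my_line_hasDerivAt (y : E) (r : ℝ) :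
    HasDerivAt (fun r : ℝ => (1 + ‖(θ + r • y) - x‖ ^ 2) ^ (p / 2))
      (fderiv ℝ (fun ϑ : E => (1 + ‖ϑ - x‖ ^ 2) ^ (p / 2)) (θ + r • y) y) r := by
  have hline : HasDerivAt (fun r : ℝ => θ + r • y) y r := by
    simpa using ((hasDerivAt_id r).smul_const y).const_add θ
  have h := (my_hasFDerivAt_V p x (θ + r • y)).comp_hasDerivAt r hline
  rwa [my_fderiv_V]

lemma my_fderiv_line_cont (y : E) :
    Continuous (fun r : ℝ =>
      fderiv ℝ (fun ϑ : E => (1 + ‖ϑ - x‖ ^ 2) ^ (p / 2)) (θ + r • y) y) := by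
  have heq : (fun r : ℝ => fderiv ℝ (fun ϑ : E => (1 + ‖ϑ - x‖ ^ 2) ^ (p / 2)) (θ + r • y) y)
      = fun r : ℝ => (p * (1 + ‖(θ + r • y) - x‖ ^ 2) ^ (p / 2 - 1))
          * (inner ℝ ((θ + r • y) - x) y) := by
    funext r
    rw [my_fderiv_V]
    simp only [ContinuousLinearMap.smul_apply, innerSL_apply_apply, smul_eq_mul]
  rw [heq]
  apply Continuous.mul
  · apply Continuous.mul continuous_const
    apply Continuous.rpow_const (by fun_prop)
    intro r
    left
    positivity
  · exact Continuous.inner (by fun_prop) continuous_const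

/-- FTC evaluation of the inner integral of `I₂`. -/
lemma my_I2_inner (y : E) :
    (∫ r in (0:ℝ)..1, fderiv ℝ (fun ϑ : E => (1 + ‖ϑ - x‖ ^ 2) ^ (p / 2)) (θ + r • y) y)
      = (1 + ‖(θ + y) - x‖ ^ 2) ^ (p / 2) - (1 + ‖θ - x‖ ^ 2) ^ (p / 2) := by
  have h := intervalIntegral.integral_eq_sub_of_hasDerivAt
    (f := fun r : ℝ => (1 + ‖(θ + r • y) - x‖ ^ 2) ^ (p / 2))
    (f' := fun r : ℝ => fderiv ℝ (fun ϑ : E => (1 + ‖ϑ - x‖ ^ 2) ^ (p / 2)) (θ + r • y) y)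
    (fun r _ => my_line_hasDerivAt p x θ y r)
    ((my_fderiv_line_cont p x θ y).intervalIntegrable 0 1)
  rw [h]
  norm_num

/-- Increment bound for `V`. -/
lemma my_V_incr_bound (hp1 : 1 ≤ p) (hp2 : p < 2) (y : E) :
    |(1 + ‖(θ + y) - x‖ ^ 2) ^ (p / 2) - (1 + ‖θ - x‖ ^ 2) ^ (p / 2)|
      ≤ p * ‖θ - x‖ ^ (p - 1) * ‖y‖ + ‖y‖ ^ p := by
  have h := my_incr_bound hp1 hp2 (a := ‖θ - x‖) (b := ‖(θ + y) - x‖) (t := ‖y‖)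
    (norm_nonneg _) (norm_nonneg _) (norm_nonneg _) ?_
  · exact h
  · have : (θ + y) - x = (θ - x) + y := by abel
    rw [this]
    have h1 := abs_norm_sub_norm_le ((θ - x) + y) (θ - x)
    simpa using h1

end FTC

section Radial

variable {d : ℕ}

local notation "E" => EuclideanSpace ℝ (Fin d)

lemma my_one_dim_ball (hd : 1 ≤ d) {q : ℝ} (hq : -(d:ℝ) < q) :
    ∫ r in Ioo (0:ℝ) 1, r ^ ((d:ℝ) - 1 + q) = 1 / ((d:ℝ) + q) := by
  rw [← integral_Ioc_eq_integral_Ioo, ← intervalIntegral.integral_of_le zero_le_one,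
    integral_rpow (Or.inl (by push_cast; linarith))]
  rw [Real.one_rpow, Real.zero_rpow (by push_cast; intro h; linarith [h] : (d:ℝ) - 1 + q + 1 ≠ 0)]
  have : (d:ℝ) - 1 + q + 1 = (d:ℝ) + q := by ring
  rw [this]
  ring

lemma my_nat_rpow {r : ℝ} (hr : 0 < r) (hd : 1 ≤ d) {q : ℝ} :
    (r : ℝ) ^ (d - 1) * r ^ q = r ^ ((d:ℝ) - 1 + q) := by
  rw [Real.rpow_add hr, ← Real.rpow_natCast r (d - 1)]
  congr 2
  push_cast [Nat.cast_sub hd]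
  ring

lemma my_ball_value (hd : 1 ≤ d) {q : ℝ} (hq : -(d:ℝ) < q) (hq0 : q < 0) :
    ∫ y in {y : E | ‖y‖ < 1}, ‖y‖ ^ q
      = (d : ℝ) * (volume (Metric.ball (0:E) 1)).toReal * (1 / ((d:ℝ) + q)) := by
  haveI : Nonempty (Fin d) := ⟨⟨0, hd⟩⟩
  haveI : Nontrivial E := inferInstance
  have hdim : Module.finrank ℝ E = d := finrank_euclideanSpace_fin
  have hS : MeasurableSet {y : E | ‖y‖ < 1} :=
    measurableSet_lt (by fun_prop) measurable_const
  have hFnorm : ∀ y : E, Set.indicator {y : E | ‖y‖ < 1} (fun y : E => ‖y‖ ^ q) y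
      = Set.indicator (Iio (1:ℝ)) (fun r => r ^ q) ‖y‖ := by
    intro y
    by_cases h : ‖y‖ < 1 <;>
      simp [Set.indicator, h, Set.mem_setOf_eq, Set.mem_Iio]
  rw [← integral_indicator hS]
  calc ∫ y : E, Set.indicator {y : E | ‖y‖ < 1} (fun y : E => ‖y‖ ^ q) y
      = ∫ y : E, Set.indicator (Iio (1:ℝ)) (fun r => r ^ q) ‖y‖ := by simp only [hFnorm]
    _ = (Module.finrank ℝ E) • (volume (Metric.ball (0:E) 1)).toReal •
        ∫ r in Ioi (0:ℝ), r ^ (Module.finrank ℝ E - 1) •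
          Set.indicator (Iio (1:ℝ)) (fun r => r ^ q) r :=
      integral_fun_norm_addHaar volume _
    _ = (d : ℝ) * (volume (Metric.ball (0:E) 1)).toReal * (1 / ((d:ℝ) + q)) := by
      rw [hdim]
      have h1 : ∀ r : ℝ, r ^ (d - 1) • Set.indicator (Iio (1:ℝ)) (fun r => r ^ q) r
          = Set.indicator (Iio (1:ℝ)) (fun r => r ^ (d - 1) * r ^ q) r := by
        intro r
        by_cases h : r ∈ Iio (1:ℝ) <;> simp [Set.indicator, h, smul_eq_mul]
      simp only [h1]
      rw [setIntegral_indicator measurableSet_Iio, Set.Ioi_inter_Iio]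
      rw [setIntegral_congr_fun measurableSet_Ioo
        (fun r hr => my_nat_rpow hr.1 hd)]
      rw [my_one_dim_ball hd hq]
      rw [nsmul_eq_mul, smul_eq_mul]
      ring

lemma my_tail_value (hd : 1 ≤ d) {q : ℝ} (hq : q < -(d:ℝ)) :
    ∫ y in {y : E | 1 ≤ ‖y‖}, ‖y‖ ^ q
      = (d : ℝ) * (volume (Metric.ball (0:E) 1)).toReal * (-1 / ((d:ℝ) + q)) := by
  haveI : Nonempty (Fin d) := ⟨⟨0, hd⟩⟩
  haveI : Nontrivial E := inferInstance
  have hdim : Module.finrank ℝ E = d := finrank_euclideanSpace_fin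
  have hS : MeasurableSet {y : E | 1 ≤ ‖y‖} :=
    measurableSet_le measurable_const (by fun_prop)
  have hFnorm : ∀ y : E, Set.indicator {y : E | 1 ≤ ‖y‖} (fun y : E => ‖y‖ ^ q) y
      = Set.indicator (Ici (1:ℝ)) (fun r => r ^ q) ‖y‖ := by
    intro y
    by_cases h : 1 ≤ ‖y‖ <;>
      simp [Set.indicator, h, Set.mem_setOf_eq, Set.mem_Ici]
  rw [← integral_indicator hS]
  calc ∫ y : E, Set.indicator {y : E | 1 ≤ ‖y‖} (fun y : E => ‖y‖ ^ q) y
      = ∫ y : E, Set.indicator (Ici (1:ℝ)) (fun r => r ^ q) ‖y‖ := by simp only [hFnorm]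
    _ = (Module.finrank ℝ E) • (volume (Metric.ball (0:E) 1)).toReal •
        ∫ r in Ioi (0:ℝ), r ^ (Module.finrank ℝ E - 1) •
          Set.indicator (Ici (1:ℝ)) (fun r => r ^ q) r :=
      integral_fun_norm_addHaar volume _
    _ = (d : ℝ) * (volume (Metric.ball (0:E) 1)).toReal * (-1 / ((d:ℝ) + q)) := by
      rw [hdim]
      have h1 : ∀ r : ℝ, r ^ (d - 1) • Set.indicator (Ici (1:ℝ)) (fun r => r ^ q) r
          = Set.indicator (Ici (1:ℝ)) (fun r => r ^ (d - 1) * r ^ q) r := by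
        intro r
        by_cases h : r ∈ Ici (1:ℝ) <;> simp [Set.indicator, h, smul_eq_mul]
      simp only [h1]
      have hsub : Ioi (0:ℝ) ∩ Ici (1:ℝ) = Ici (1:ℝ) :=
        Set.inter_eq_self_of_subset_right (fun r hr => Set.mem_Ioi.2 (lt_of_lt_of_le zero_lt_one hr))
      rw [setIntegral_indicator measurableSet_Ici, hsub, integral_Ici_eq_integral_Ioi]
      rw [setIntegral_congr_fun measurableSet_Ioi
        (fun r hr => my_nat_rpow (lt_trans zero_lt_one hr) hd)]
      rw [integral_Ioi_rpow_of_lt (by push_cast; linarith) zero_lt_one]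
      rw [Real.one_rpow, nsmul_eq_mul, smul_eq_mul]
      have : (d:ℝ) - 1 + q + 1 = (d:ℝ) + q := by ring
      rw [this]
      ring

lemma my_tail_integrable (hd : 1 ≤ d) {q : ℝ} (hq : q < -(d:ℝ)) :
    IntegrableOn (fun y : E => ‖y‖ ^ q) {y : E | 1 ≤ ‖y‖} := by
  have hdim : Module.finrank ℝ E = d := finrank_euclideanSpace_fin
  have hq0 : q < 0 := lt_of_lt_of_le hq (neg_nonpos.mpr (Nat.cast_nonneg d))
  have hS : MeasurableSet {y : E | 1 ≤ ‖y‖} :=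
    measurableSet_le measurable_const (by fun_prop)
  have hint : Integrable (fun y : E => (1 + ‖y‖) ^ q) volume := by
    have h5 : Integrable (fun y : EuclideanSpace ℝ (Fin d) => (1 + ‖y‖) ^ (-(-q))) volume :=
      integrable_one_add_norm (by rw [hdim]; linarith)
    simpa [neg_neg] using h5
  apply Integrable.mono' ((hint.const_mul ((2:ℝ) ^ (-q))).restrict (s := {y : E | 1 ≤ ‖y‖}))
  · exact (Measurable.aestronglyMeasurable (by fun_prop))
  · rw [ae_restrict_iff' hS]
    apply ae_of_all
    intro y hy
    have hy1 : (1:ℝ) ≤ ‖y‖ := hy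
    have h0 : (0:ℝ) < (1 + ‖y‖) / 2 := by linarith
    have h2 : (1 + ‖y‖) / 2 ≤ ‖y‖ := by linarith
    have h3 : ‖y‖ ^ q ≤ ((1 + ‖y‖) / 2) ^ q :=
      Real.rpow_le_rpow_of_nonpos h0 h2 hq0.le
    have h4 : ((1 + ‖y‖) / 2) ^ q = (2:ℝ) ^ (-q) * (1 + ‖y‖) ^ q := by
      rw [Real.div_rpow (by linarith) (by norm_num), Real.rpow_neg (by norm_num)]
      ring
    rw [Real.norm_eq_abs, abs_of_nonneg (Real.rpow_nonneg (norm_nonneg y) q)]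
    rw [h4] at h3
    exact h3

lemma my_ball_integrable (hd : 1 ≤ d) {q : ℝ} (hq : -(d:ℝ) < q) (hq0 : q < 0) :
    IntegrableOn (fun y : E => ‖y‖ ^ q) {y : E | ‖y‖ < 1} := by
  haveI : Nonempty (Fin d) := ⟨⟨0, hd⟩⟩
  haveI : Nontrivial E := inferInstance
  have hdim : Module.finrank ℝ E = d := finrank_euclideanSpace_fin
  have hS : MeasurableSet {y : E | ‖y‖ < 1} :=
    measurableSet_lt (by fun_prop) measurable_const
  have hSb : {y : E | ‖y‖ < 1} = Metric.ball (0:E) 1 := by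
    ext y; simp [mem_ball_zero_iff]
  have hm : Measurable (fun y : E => ‖y‖ ^ q) := by fun_prop
  haveI : IsFiniteMeasure (volume.restrict {y : E | ‖y‖ < 1}) := by
    constructor
    rw [Measure.restrict_apply_univ, hSb]
    exact measure_ball_lt_top
  refine ⟨(hm.aestronglyMeasurable).restrict, ?_⟩
  rw [hasFiniteIntegral_iff_ofReal (ae_of_all _ fun y => Real.rpow_nonneg (norm_nonneg y) q)]
  -- truncations
  set gk : ℕ → E → ℝ := fun k y => min (‖y‖ ^ q) k with hgk
  have hgkm : ∀ k, Measurable (gk k) := fun k => hm.min measurable_const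
  have hgknn : ∀ k y, 0 ≤ gk k y := fun k y =>
    le_min (Real.rpow_nonneg (norm_nonneg y) q) (Nat.cast_nonneg k)
  have hgkint : ∀ k, Integrable (gk k) (volume.restrict {y : E | ‖y‖ < 1}) := by
    intro k
    apply Integrable.mono' (integrable_const (k:ℝ))
      ((hgkm k).aestronglyMeasurable).restrict
    apply ae_of_all
    intro y
    rw [Real.norm_eq_abs, abs_of_nonneg (hgknn k y)]
    exact min_le_right _ _
  -- uniform bound on truncated integrals
  set M : ℝ := (d:ℝ) * (volume (Metric.ball (0:E) 1)).toReal *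
      ∫ r in Ioo (0:ℝ) 1, r ^ ((d:ℝ) - 1 + q) with hM
  have hbound : ∀ k, ∫ y in {y : E | ‖y‖ < 1}, gk k y ≤ M := by
    intro k
    have hFnorm : ∀ y : E, Set.indicator {y : E | ‖y‖ < 1} (gk k) y
        = Set.indicator (Iio (1:ℝ)) (fun r => min (r ^ q) k) ‖y‖ := by
      intro y
      by_cases h : ‖y‖ < 1 <;>
        simp [hgk, Set.indicator, h, Set.mem_setOf_eq, Set.mem_Iio]
    have e1 : ∫ y in {y : E | ‖y‖ < 1}, gk k y
        = (d:ℝ) * (volume (Metric.ball (0:E) 1)).toReal *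
          ∫ r in Ioi (0:ℝ), r ^ (d - 1) •
            Set.indicator (Iio (1:ℝ)) (fun r => min (r ^ q) k) r := by
      rw [← integral_indicator hS]
      calc ∫ y : E, Set.indicator {y : E | ‖y‖ < 1} (gk k) y
          = ∫ y : E, Set.indicator (Iio (1:ℝ)) (fun r => min (r ^ q) k) ‖y‖ := by
            simp only [hFnorm]
        _ = (Module.finrank ℝ E) • (volume (Metric.ball (0:E) 1)).toReal •
            ∫ r in Ioi (0:ℝ), r ^ (Module.finrank ℝ E - 1) •
              Set.indicator (Iio (1:ℝ)) (fun r => min (r ^ q) k) r :=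
          integral_fun_norm_addHaar volume _
        _ = _ := by rw [hdim, nsmul_eq_mul, smul_eq_mul]; ring
    rw [e1, hM]
    have hvol0 : (0:ℝ) ≤ (d:ℝ) * (volume (Metric.ball (0:E) 1)).toReal := by positivity
    apply mul_le_mul_of_nonneg_left _ hvol0
    -- 1-D comparison
    have hH : Integrable (Set.indicator (Ioo (0:ℝ) 1) (fun r => r ^ ((d:ℝ) - 1 + q)))
        (volume.restrict (Ioi (0:ℝ))) := by
      have base : IntegrableOn (fun r : ℝ => r ^ ((d:ℝ) - 1 + q)) (Ioo (0:ℝ) 1) := by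
        have h2 := (intervalIntegral.intervalIntegrable_rpow'
          (a := 0) (b := 1) (r := (d:ℝ) - 1 + q) (by push_cast; linarith))
        rw [intervalIntegrable_iff_integrableOn_Ioc_of_le zero_le_one] at h2
        exact h2.mono_set Set.Ioo_subset_Ioc_self
      exact (base.integrable_indicator measurableSet_Ioo).restrict
    have hle : ∀ᵐ r ∂(volume.restrict (Ioi (0:ℝ))),
        r ^ (d - 1) • Set.indicator (Iio (1:ℝ)) (fun r => min (r ^ q) k) r
          ≤ Set.indicator (Ioo (0:ℝ) 1) (fun r => r ^ ((d:ℝ) - 1 + q)) r := by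
      rw [ae_restrict_iff' measurableSet_Ioi]
      apply ae_of_all
      intro r hr
      have hr0 : (0:ℝ) < r := hr
      by_cases h : r < 1
      · have hmem : r ∈ Ioo (0:ℝ) 1 := ⟨hr0, h⟩
        rw [Set.indicator_of_mem (Set.mem_Iio.2 h), Set.indicator_of_mem hmem, smul_eq_mul]
        calc r ^ (d - 1) * min (r ^ q) k ≤ r ^ (d - 1) * r ^ q :=
              mul_le_mul_of_nonneg_left (min_le_left _ _) (by positivity)
          _ = r ^ ((d:ℝ) - 1 + q) := my_nat_rpow hr0 hd
      · rw [Set.indicator_of_notMem (by simpa using h),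
          Set.indicator_of_notMem (fun hmem => h hmem.2)]
        simp
    have hnn : ∀ᵐ r ∂(volume.restrict (Ioi (0:ℝ))),
        0 ≤ r ^ (d - 1) • Set.indicator (Iio (1:ℝ)) (fun r => min (r ^ q) k) r := by
      rw [ae_restrict_iff' measurableSet_Ioi]
      apply ae_of_all
      intro r hr
      have hr0 : (0:ℝ) < r := hr
      rw [smul_eq_mul]
      by_cases h : r < 1
      · rw [Set.indicator_of_mem (Set.mem_Iio.2 h)]
        apply mul_nonneg (by positivity)
        exact le_min (Real.rpow_nonneg hr0.le q) (Nat.cast_nonneg k)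
      · rw [Set.indicator_of_notMem (by simpa using h)]
        simp
    calc ∫ r in Ioi (0:ℝ), r ^ (d - 1) •
            Set.indicator (Iio (1:ℝ)) (fun r => min (r ^ q) k) r
        ≤ ∫ r in Ioi (0:ℝ), Set.indicator (Ioo (0:ℝ) 1) (fun r => r ^ ((d:ℝ) - 1 + q)) r :=
          integral_mono_of_nonneg hnn hH hle
      _ = ∫ r in Ioo (0:ℝ) 1, r ^ ((d:ℝ) - 1 + q) := by
          rw [setIntegral_indicator measurableSet_Ioo,
            Set.inter_eq_self_of_subset_right Set.Ioo_subset_Ioi_self]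
  -- monotone convergence
  have h1 : ∀ y : E, ENNReal.ofReal (‖y‖ ^ q) = ⨆ k : ℕ, ENNReal.ofReal (gk k y) := by
    intro y
    apply le_antisymm
    · refine le_iSup_of_le ⌈‖y‖ ^ q⌉₊ ?_
      have : gk ⌈‖y‖ ^ q⌉₊ y = ‖y‖ ^ q := min_eq_left (Nat.le_ceil _)
      rw [this]
    · exact iSup_le fun k => ENNReal.ofReal_le_ofReal (min_le_left _ _)
  calc ∫⁻ y in {y : E | ‖y‖ < 1}, ENNReal.ofReal (‖y‖ ^ q)
      = ∫⁻ y in {y : E | ‖y‖ < 1}, ⨆ k : ℕ, ENNReal.ofReal (gk k y) := lintegral_congr h1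
    _ = ⨆ k : ℕ, ∫⁻ y in {y : E | ‖y‖ < 1}, ENNReal.ofReal (gk k y) :=
        lintegral_iSup (fun k => ((hgkm k).ennreal_ofReal))
          (fun i j hij y => ENNReal.ofReal_le_ofReal
            (min_le_min le_rfl (by exact_mod_cast Nat.cast_le.2 hij)))
    _ ≤ ENNReal.ofReal M := by
        apply iSup_le
        intro k
        rw [← ofReal_integral_eq_lintegral_ofReal (hgkint k) (ae_of_all _ (hgknn k))]
        exact ENNReal.ofReal_le_ofReal (hbound k)
    _ < ⊤ := ENNReal.ofReal_lt_top

end Radial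

section Assembly

variable {d : ℕ}

local notation "EE" => EuclideanSpace ℝ (Fin d)

lemma my_omega (hd : 1 ≤ d) :
    (d:ℝ) * (volume (Metric.ball (0:EE) 1)).toReal
      = 2 * π ^ ((d:ℝ)/2) / Gamma ((d:ℝ)/2) := by
  haveI : Nonempty (Fin d) := ⟨⟨0, hd⟩⟩
  have hd1 : (1:ℝ) ≤ (d:ℝ) := by exact_mod_cast hd
  have hΓ : 0 < Gamma ((d:ℝ)/2) := Real.Gamma_pos_of_pos (by linarith)
  have hΓ1 : 0 < Gamma ((d:ℝ)/2 + 1) := Real.Gamma_pos_of_pos (by linarith)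
  rw [EuclideanSpace.volume_ball]
  simp only [Fintype.card_fin, ENNReal.ofReal_one, one_pow, one_mul]
  rw [ENNReal.toReal_ofReal (by positivity)]
  have hsq : (Real.sqrt π) ^ d = π ^ ((d:ℝ)/2) := by
    rw [Real.sqrt_eq_rpow, ← Real.rpow_natCast (π ^ ((1:ℝ)/2)) d, ← Real.rpow_mul pi_nonneg]
    congr 1
    ring
  rw [hsq, Real.Gamma_add_one (by positivity : (d:ℝ)/2 ≠ 0)]
  field_simp

end Assembly

/-- Bound on the integral-decomposition representation of the fractional
Laplacian `(-Δ)^{α/2} V_p(θ)` of the Lyapunov function `V_p(θ) = (1 + ‖θ - x‖²)^{p/2}`,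
for `α ∈ (1,2)` and `p ∈ [1, α)`. -/
theorem fractional_laplacian_lyapunov_bound
    {d : ℕ} (hd : 1 ≤ d) (α p : ℝ) (hα1 : 1 < α) (hα2 : α < 2)
    (hp1 : 1 ≤ p) (hpα : p < α)
    (x θ : EuclideanSpace ℝ (Fin d)) :
    |(α * (2 : ℝ) ^ (α - 1) * π ^ (-(d : ℝ) / 2) *
        (Gamma ((d + α) / 2) / Gamma (1 - α / 2))) *
      ((∫ y in {y : EuclideanSpace ℝ (Fin d) | ‖y‖ < 1},
          (∫ r in (0 : ℝ)..1, ∫ s in (0 : ℝ)..r,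
            iteratedFDeriv ℝ 2 (fun ϑ => (1 + ‖ϑ - x‖ ^ 2) ^ (p / 2)) (θ + s • y) ![y, y])
            * ‖y‖ ^ (-(α + d)))
        + (∫ y in {y : EuclideanSpace ℝ (Fin d) | 1 ≤ ‖y‖},
            (∫ r in (0 : ℝ)..1,
              fderiv ℝ (fun ϑ => (1 + ‖ϑ - x‖ ^ 2) ^ (p / 2)) (θ + r • y) y)
              * ‖y‖ ^ (-(α + d))))|
      ≤ (α * (2 : ℝ) ^ α * Gamma ((d + α) / 2) / (Gamma (1 - α / 2) * Gamma (d / 2))) *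
          (p * (Real.sqrt d + 2) / (2 - α) + (p / (α - 1)) * ‖θ - x‖ ^ (p - 1)
            + 1 / (α - p)) := by
  have hd1 : (1:ℝ) ≤ (d:ℝ) := by exact_mod_cast hd
  have hp2 : p < 2 := lt_trans hpα hα2
  have hp0 : (0:ℝ) < p := by linarith
  set a : ℝ := ‖θ - x‖ with ha
  have ha0 : 0 ≤ a := norm_nonneg _
  set ω : ℝ := (d:ℝ) * (volume (Metric.ball (0:EuclideanSpace ℝ (Fin d)) 1)).toReal with hω
  have hω0 : 0 ≤ ω := by positivity
  set Γ1 : ℝ := Gamma ((d + α) / 2) with hΓ1def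
  set Γ2 : ℝ := Gamma (1 - α / 2) with hΓ2def
  set Γ3 : ℝ := Gamma ((d:ℝ) / 2) with hΓ3def
  have hΓ1 : 0 < Γ1 := Real.Gamma_pos_of_pos (by positivity)
  have hΓ2 : 0 < Γ2 := Real.Gamma_pos_of_pos (by linarith)
  have hΓ3 : 0 < Γ3 := Real.Gamma_pos_of_pos (by linarith)
  set C : ℝ := α * (2 : ℝ) ^ (α - 1) * π ^ (-(d : ℝ) / 2) * (Γ1 / Γ2) with hC
  have hC0 : 0 ≤ C := by
    apply mul_nonneg
    apply mul_nonneg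
    apply mul_nonneg (by linarith)
    · exact (Real.rpow_pos_of_pos two_pos _).le
    · exact (Real.rpow_pos_of_pos pi_pos _).le
    · positivity
  -- bound on I₁
  set I₁ : ℝ := ∫ y in {y : EuclideanSpace ℝ (Fin d) | ‖y‖ < 1},
      (∫ r in (0 : ℝ)..1, ∫ s in (0 : ℝ)..r,
        iteratedFDeriv ℝ 2 (fun ϑ => (1 + ‖ϑ - x‖ ^ 2) ^ (p / 2)) (θ + s • y) ![y, y])
        * ‖y‖ ^ (-(α + d)) with hI₁def
  have hq1 : -(d:ℝ) < 2 - α - (d:ℝ) := by linarith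
  have hq1' : 2 - α - (d:ℝ) < 0 := by linarith
  have hballint := my_ball_integrable (d := d) hd hq1 hq1'
  have hI1 : |I₁| ≤ p * (ω * (1 / (2 - α))) := by
    have hbd : ∀ y : EuclideanSpace ℝ (Fin d),
        ‖(∫ r in (0 : ℝ)..1, ∫ s in (0 : ℝ)..r,
          iteratedFDeriv ℝ 2 (fun ϑ => (1 + ‖ϑ - x‖ ^ 2) ^ (p / 2)) (θ + s • y) ![y, y])
          * ‖y‖ ^ (-(α + d))‖ ≤ p * ‖y‖ ^ (2 - α - (d:ℝ)) := by
      intro y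
      by_cases hy : y = 0
      · subst hy
        simp only [norm_zero]
        rw [Real.zero_rpow (by intro h; linarith [h] : -(α + (d:ℝ)) ≠ 0),
          Real.zero_rpow (by intro h; linarith [h] : 2 - α - (d:ℝ) ≠ 0)]
        simp
      · have hy0 : 0 < ‖y‖ := norm_pos_iff.2 hy
        have step1 : ∀ r ∈ Set.uIoc (0:ℝ) 1,
            ‖∫ s in (0:ℝ)..r,
              iteratedFDeriv ℝ 2 (fun ϑ => (1 + ‖ϑ - x‖ ^ 2) ^ (p / 2)) (θ + s • y) ![y, y]‖
              ≤ 2 * p * ‖y‖ ^ 2 * r := by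
          intro r hr
          rw [Set.uIoc_of_le zero_le_one] at hr
          have hb : ∀ s ∈ Set.uIoc (0:ℝ) r,
              ‖iteratedFDeriv ℝ 2 (fun ϑ => (1 + ‖ϑ - x‖ ^ 2) ^ (p / 2)) (θ + s • y) ![y, y]‖
                ≤ 2 * p * ‖y‖ ^ 2 := by
            intro s _
            rw [Real.norm_eq_abs]
            exact my_hessian_bound p x hp1 hp2.le (θ + s • y) y
          have h := intervalIntegral.norm_integral_le_of_norm_le_const hb
          rw [sub_zero, abs_of_pos hr.1] at h
          exact h
        have step2 : ‖∫ r in (0:ℝ)..1, ∫ s in (0:ℝ)..r,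
            iteratedFDeriv ℝ 2 (fun ϑ => (1 + ‖ϑ - x‖ ^ 2) ^ (p / 2)) (θ + s • y) ![y, y]‖
            ≤ p * ‖y‖ ^ 2 := by
          have hgint : IntervalIntegrable (fun r : ℝ => 2 * p * ‖y‖ ^ 2 * r) volume 0 1 :=
            (continuous_const.mul continuous_id).intervalIntegrable 0 1
          have h := intervalIntegral.norm_integral_le_abs_of_norm_le
            (g := fun r : ℝ => 2 * p * ‖y‖ ^ 2 * r)
            ((ae_restrict_iff' measurableSet_uIoc).2 (ae_of_all _ step1)) hgint
          have hg : (∫ r in (0:ℝ)..1, 2 * p * ‖y‖ ^ 2 * r) = p * ‖y‖ ^ 2 := by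
            rw [intervalIntegral.integral_const_mul, integral_id]
            ring
          rw [hg, abs_of_nonneg (by positivity)] at h
          exact h
        rw [Real.norm_eq_abs, abs_mul,
          abs_of_nonneg (Real.rpow_nonneg (norm_nonneg y) _)]
        have hmul : |∫ r in (0:ℝ)..1, ∫ s in (0:ℝ)..r,
            iteratedFDeriv ℝ 2 (fun ϑ => (1 + ‖ϑ - x‖ ^ 2) ^ (p / 2)) (θ + s • y) ![y, y]|
            * ‖y‖ ^ (-(α + (d:ℝ))) ≤ (p * ‖y‖ ^ 2) * ‖y‖ ^ (-(α + (d:ℝ))) := by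
          apply mul_le_mul_of_nonneg_right _ (Real.rpow_nonneg (norm_nonneg y) _)
          rw [← Real.norm_eq_abs]
          exact step2
        refine le_trans hmul (le_of_eq ?_)
        rw [mul_assoc]
        congr 1
        rw [← Real.rpow_natCast ‖y‖ 2, ← Real.rpow_add hy0]
        congr 1
        push_cast
        ring
    calc |I₁| = ‖I₁‖ := (Real.norm_eq_abs I₁).symm
      _ ≤ ∫ y in {y : EuclideanSpace ℝ (Fin d) | ‖y‖ < 1}, p * ‖y‖ ^ (2 - α - (d:ℝ)) :=
        MeasureTheory.norm_integral_le_of_norm_le (hballint.const_mul p)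
          (ae_of_all _ hbd)
      _ = p * (ω * (1 / (2 - α))) := by
        rw [MeasureTheory.integral_const_mul, my_ball_value hd hq1 hq1',
          show (d:ℝ) + (2 - α - (d:ℝ)) = 2 - α by ring]
        try rw [hω]
        try ring
  -- bound on I₂
  set I₂ : ℝ := ∫ y in {y : EuclideanSpace ℝ (Fin d) | 1 ≤ ‖y‖},
      (∫ r in (0 : ℝ)..1,
        fderiv ℝ (fun ϑ => (1 + ‖ϑ - x‖ ^ 2) ^ (p / 2)) (θ + r • y) y)
        * ‖y‖ ^ (-(α + d)) with hI₂def
  have hq2 : (1 : ℝ) - α - (d:ℝ) < -(d:ℝ) := by linarith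
  have hq3 : p - α - (d:ℝ) < -(d:ℝ) := by linarith
  have htail1 := my_tail_integrable (d := d) hd hq2
  have htail2 := my_tail_integrable (d := d) hd hq3
  have hI2 : |I₂| ≤ p * a ^ (p - 1) * (ω * (1 / (α - 1))) + ω * (1 / (α - p)) := by
    have hI₂eq : I₂ = ∫ y in {y : EuclideanSpace ℝ (Fin d) | 1 ≤ ‖y‖},
        ((1 + ‖(θ + y) - x‖ ^ 2) ^ (p / 2) - (1 + ‖θ - x‖ ^ 2) ^ (p / 2))
          * ‖y‖ ^ (-(α + d)) := by
      rw [hI₂def]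
      congr 1
      funext y
      rw [my_I2_inner]
    have hbd : ∀ᵐ y ∂(volume.restrict {y : EuclideanSpace ℝ (Fin d) | 1 ≤ ‖y‖}),
        ‖((1 + ‖(θ + y) - x‖ ^ 2) ^ (p / 2) - (1 + ‖θ - x‖ ^ 2) ^ (p / 2))
          * ‖y‖ ^ (-(α + (d:ℝ)))‖
          ≤ p * a ^ (p - 1) * ‖y‖ ^ (1 - α - (d:ℝ)) + ‖y‖ ^ (p - α - (d:ℝ)) := by
      rw [ae_restrict_iff' (measurableSet_le measurable_const (by fun_prop))]
      apply ae_of_all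
      intro y hy
      have hy1 : (1:ℝ) ≤ ‖y‖ := hy
      have hy0 : (0:ℝ) < ‖y‖ := lt_of_lt_of_le zero_lt_one hy1
      rw [Real.norm_eq_abs, abs_mul, abs_of_nonneg (Real.rpow_nonneg (norm_nonneg y) _)]
      have h1 := my_V_incr_bound p x θ hp1 hp2 y
      have h2 : |(1 + ‖(θ + y) - x‖ ^ 2) ^ (p / 2) - (1 + ‖θ - x‖ ^ 2) ^ (p / 2)|
          * ‖y‖ ^ (-(α + (d:ℝ)))
          ≤ (p * a ^ (p - 1) * ‖y‖ + ‖y‖ ^ p) * ‖y‖ ^ (-(α + (d:ℝ))) :=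
        mul_le_mul_of_nonneg_right h1 (Real.rpow_nonneg (norm_nonneg y) _)
      refine le_trans h2 (le_of_eq ?_)
      rw [add_mul]
      congr 1
      · rw [mul_assoc]
        congr 1
        nth_rewrite 1 [← Real.rpow_one ‖y‖]
        rw [← Real.rpow_add hy0]
        congr 1
        ring
      · rw [← Real.rpow_add hy0]
        congr 1
        ring
    calc |I₂| = ‖I₂‖ := (Real.norm_eq_abs I₂).symm
      _ ≤ ∫ y in {y : EuclideanSpace ℝ (Fin d) | 1 ≤ ‖y‖},
          (p * a ^ (p - 1) * ‖y‖ ^ (1 - α - (d:ℝ)) + ‖y‖ ^ (p - α - (d:ℝ))) := by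
        rw [hI₂eq]
        exact MeasureTheory.norm_integral_le_of_norm_le
          ((htail1.const_mul (p * a ^ (p - 1))).add htail2) hbd
      _ = p * a ^ (p - 1) * (ω * (1 / (α - 1))) + ω * (1 / (α - p)) := by
        rw [integral_add (htail1.const_mul (p * a ^ (p - 1))) htail2,
          MeasureTheory.integral_const_mul, my_tail_value hd hq2, my_tail_value hd hq3]
        rw [show (d:ℝ) + (1 - α - (d:ℝ)) = -(α - 1) by ring,
          show (d:ℝ) + (p - α - (d:ℝ)) = -(α - p) by ring]
        try rw [div_neg, div_neg, neg_div, neg_div, neg_neg, neg_neg]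
        try rw [hω]
        try ring
  -- combine
  have hCω : C * ω = α * (2 : ℝ) ^ α * Γ1 / (Γ2 * Γ3) := by
    have hπ : π ^ (-(d:ℝ) / 2) * π ^ ((d:ℝ) / 2) = 1 := by
      rw [← Real.rpow_add pi_pos, show -(d:ℝ) / 2 + (d:ℝ) / 2 = 0 by ring, Real.rpow_zero]
    have h2 : (2:ℝ) ^ (α - 1) * 2 = (2:ℝ) ^ α := by
      nth_rewrite 2 [show α = (α - 1) + 1 by ring]
      rw [Real.rpow_add two_pos, Real.rpow_one]
    have key : C * ω = α * ((2:ℝ) ^ (α - 1) * 2) *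
        (π ^ (-(d:ℝ) / 2) * π ^ ((d:ℝ) / 2)) * Γ1 / (Γ2 * Γ3) := by
      rw [hC, hω, my_omega hd, ← hΓ3def]
      field_simp
    rw [key, hπ, h2]
    ring
  calc |C * (I₁ + I₂)| = C * |I₁ + I₂| := by
        rw [abs_mul, abs_of_nonneg hC0]
    _ ≤ C * (|I₁| + |I₂|) := mul_le_mul_of_nonneg_left (abs_add_le _ _) hC0
    _ ≤ C * (ω * (p / (2 - α) + p / (α - 1) * a ^ (p - 1) + 1 / (α - p))) := by
        apply mul_le_mul_of_nonneg_left _ hC0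
        calc |I₁| + |I₂| ≤ p * (ω * (1 / (2 - α)))
              + (p * a ^ (p - 1) * (ω * (1 / (α - 1))) + ω * (1 / (α - p))) :=
            add_le_add hI1 hI2
          _ = ω * (p / (2 - α) + p / (α - 1) * a ^ (p - 1) + 1 / (α - p)) := by ring
    _ ≤ (α * (2 : ℝ) ^ α * Γ1 / (Γ2 * Γ3)) *
          (p * (Real.sqrt d + 2) / (2 - α) + p / (α - 1) * a ^ (p - 1) + 1 / (α - p)) := by
        rw [← mul_assoc, hCω]
        apply mul_le_mul_of_nonneg_left _ (by rw [← hCω]; exact mul_nonneg hC0 hω0)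
        have hsqrt : (1:ℝ) ≤ Real.sqrt d + 2 := by
          have := Real.sqrt_nonneg (d:ℝ)
          linarith
        have : p / (2 - α) ≤ p * (Real.sqrt d + 2) / (2 - α) := by
          apply div_le_div_of_nonneg_right ?_ (by linarith)
          nlinarith
        linarith
end

section
/- Let d ≥ 1, α ∈ (1,2), p ∈ [1, α), x ∈ ℝ^d, and let V_p : ℝ^d → ℝ be V_p(θ) = (1 + ‖θ − x‖²)^{p/2}. Then for every θ ∈ ℝ^d: (i) ‖∇V_p(θ)‖ ≤ p ‖θ − x‖^{p−1}, and (ii) the Frobenius norm of the Hessian satisfies ‖∇²V_p(θ)‖_F ≤ p(√d + 2). -/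
open scoped BigOperators

section lyapunov_aux

open Real

variable {E : Type*} [NormedAddCommGroup E] [InnerProductSpace ℝ E]

/-- The real inner product, bundled as a continuous linear map in both arguments. -/
noncomputable def innerR (E : Type*) [NormedAddCommGroup E] [InnerProductSpace ℝ E] :
    E →L[ℝ] E →L[ℝ] ℝ := innerSL ℝ

@[simp] lemma innerR_apply (u v : E) : innerR E u v = inner ℝ u v := rfl

private lemma key_hasfderiv (p : ℝ) (x θ : E) :
    HasFDerivAt (fun ϑ : E => (1 + ‖ϑ - x‖ ^ 2) ^ (p / 2))
      ((p * (1 + ‖θ - x‖ ^ 2) ^ (p / 2 - 1)) • innerR E (θ - x)) θ := by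
  have h0 : HasFDerivAt (fun y : E => y - x) (ContinuousLinearMap.id ℝ E) θ :=
    (hasFDerivAt_id θ).sub_const x
  have h1 : HasFDerivAt (fun y : E => 1 + ‖y - x‖ ^ 2)
      (2 • (innerSL ℝ (θ - x)).comp (ContinuousLinearMap.id ℝ E)) θ := by
    simpa using h0.norm_sq.const_add 1
  have hpos : (0:ℝ) < 1 + ‖θ - x‖ ^ 2 := by positivity
  have h2 := (Real.hasDerivAt_rpow_const (x := 1 + ‖θ - x‖ ^ 2) (p := p / 2)
    (Or.inl hpos.ne')).comp_hasFDerivAt θ h1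
  refine h2.congr_fderiv ?_
  ext v
  simp [two_smul]
  ring

private lemma key_hasfderiv2 (p : ℝ) (x θ : E) :
    HasFDerivAt (fun y : E => (p * (1 + ‖y - x‖ ^ 2) ^ (p / 2 - 1)) • innerR E (y - x))
      ((p * (1 + ‖θ - x‖ ^ 2) ^ (p / 2 - 1)) • innerR E +
        ((p * (p - 2) * (1 + ‖θ - x‖ ^ 2) ^ (p / 2 - 2)) • innerR E (θ - x)).smulRight
          (innerR E (θ - x))) θ := by
  have h0 : HasFDerivAt (fun y : E => y - x) (ContinuousLinearMap.id ℝ E) θ :=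
    (hasFDerivAt_id θ).sub_const x
  have h1 : HasFDerivAt (fun y : E => 1 + ‖y - x‖ ^ 2)
      (2 • (innerSL ℝ (θ - x)).comp (ContinuousLinearMap.id ℝ E)) θ := by
    simpa using h0.norm_sq.const_add 1
  have hpos : (0:ℝ) < 1 + ‖θ - x‖ ^ 2 := by positivity
  have hc : HasFDerivAt (fun y : E => p * (1 + ‖y - x‖ ^ 2) ^ (p / 2 - 1))
      ((p * (p - 2) * (1 + ‖θ - x‖ ^ 2) ^ (p / 2 - 2)) • innerR E (θ - x)) θ := by
    have h2 := ((Real.hasDerivAt_rpow_const (x := 1 + ‖θ - x‖ ^ 2) (p := p / 2 - 1)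
      (Or.inl hpos.ne')).comp_hasFDerivAt θ h1).const_mul p
    refine h2.congr_fderiv ?_
    ext v
    simp [two_smul]
    ring
  have hL : HasFDerivAt (fun y : E => innerR E (y - x)) (innerR E) θ := by
    have h := ((innerR E).hasFDerivAt (x := θ - x)).comp θ h0
    rw [ContinuousLinearMap.comp_id] at h
    exact h
  exact hc.smul hL

private lemma frobenius_bound {d : ℕ} (a c : ℝ) (u : EuclideanSpace ℝ (Fin d)) :
    Real.sqrt (∑ i : Fin d, ∑ j : Fin d,
      (a * (u i * u j) + (if i = j then c else 0))^2)
      ≤ |a| * ‖u‖^2 + Real.sqrt d * |c| := by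
  have hnorm : ∀ v : EuclideanSpace ℝ (Fin d × Fin d),
      ‖v‖ = Real.sqrt (∑ i : Fin d, ∑ j : Fin d, (v (i, j))^2) := by
    intro v
    rw [EuclideanSpace.norm_eq]
    congr 1
    rw [Fintype.sum_prod_type]
    exact Finset.sum_congr rfl fun i _ => Finset.sum_congr rfl fun j _ => by
      rw [Real.norm_eq_abs, sq_abs]
  set vA : EuclideanSpace ℝ (Fin d × Fin d) :=
    (WithLp.equiv 2 _).symm (fun q => a * (u q.1 * u q.2)) with hvA
  set vB : EuclideanSpace ℝ (Fin d × Fin d) :=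
    (WithLp.equiv 2 _).symm (fun q => if q.1 = q.2 then c else 0) with hvB
  have hApp : ∀ i j : Fin d, (vA + vB) (i, j) = a * (u i * u j) + (if i = j then c else 0) := by
    intro i j; simp [hvA, hvB]
  have h1 : ∑ i : Fin d, (u i)^2 = ‖u‖^2 := by
    rw [EuclideanSpace.norm_eq, Real.sq_sqrt (by positivity)]
    exact Finset.sum_congr rfl fun i _ => by rw [Real.norm_eq_abs, sq_abs]
  have hA : ‖vA‖ = |a| * ‖u‖^2 := by
    rw [hnorm vA]
    have h2 : ∑ i : Fin d, ∑ j : Fin d, (vA (i, j))^2 = (a * ‖u‖^2)^2 := by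
      simp only [hvA, WithLp.equiv_symm_apply, PiLp.toLp_apply]
      rw [← h1]
      calc ∑ i : Fin d, ∑ j : Fin d, (a * (u i * u j))^2
          = ∑ i : Fin d, (a^2 * (u i)^2 * ∑ j : Fin d, (u j)^2) := by
            refine Finset.sum_congr rfl fun i _ => ?_
            rw [Finset.mul_sum]
            exact Finset.sum_congr rfl fun j _ => by ring
        _ = (∑ i : Fin d, a^2 * (u i)^2) * ∑ j : Fin d, (u j)^2 := by
            rw [← Finset.sum_mul]
        _ = (a * ∑ i : Fin d, (u i)^2)^2 := by
            rw [← Finset.mul_sum]; ring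
    rw [h2, Real.sqrt_sq_eq_abs, abs_mul, abs_of_nonneg (by positivity : (0:ℝ) ≤ ‖u‖^2)]
  have hB : ‖vB‖ = Real.sqrt d * |c| := by
    rw [hnorm vB]
    have h2 : ∑ i : Fin d, ∑ j : Fin d, (vB (i, j))^2 = d * c^2 := by
      simp only [hvB, WithLp.equiv_symm_apply, PiLp.toLp_apply]
      have h3 : ∀ i : Fin d, (∑ j : Fin d, (if i = j then c else 0)^2) = c^2 := by
        intro i
        simp [apply_ite (·^2)]
      simp_rw [h3]
      simp [Finset.card_univ]
    rw [h2, Real.sqrt_mul (by positivity), Real.sqrt_sq_eq_abs]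
  calc Real.sqrt (∑ i : Fin d, ∑ j : Fin d,
        (a * (u i * u j) + (if i = j then c else 0))^2)
      = ‖vA + vB‖ := by
        rw [hnorm]
        congr 1
    _ ≤ ‖vA‖ + ‖vB‖ := norm_add_le _ _
    _ = |a| * ‖u‖^2 + Real.sqrt d * |c| := by rw [hA, hB]

private lemma hessian_entry {d : ℕ} (p : ℝ) (x θ : EuclideanSpace ℝ (Fin d)) (i j : Fin d) :
    (iteratedFDeriv ℝ 2 (fun ϑ => (1 + ‖ϑ - x‖ ^ 2) ^ (p / 2)) θ
          ![EuclideanSpace.single i (1 : ℝ), EuclideanSpace.single j (1 : ℝ)])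
      = (p * (p - 2) * (1 + ‖θ - x‖ ^ 2) ^ (p / 2 - 2)) * ((θ - x) i * (θ - x) j)
        + (if i = j then p * (1 + ‖θ - x‖ ^ 2) ^ (p / 2 - 1) else 0) := by
  have hfd : (fderiv ℝ (fun ϑ : EuclideanSpace ℝ (Fin d) => (1 + ‖ϑ - x‖ ^ 2) ^ (p / 2)))
      = fun y => (p * (1 + ‖y - x‖ ^ 2) ^ (p / 2 - 1)) • innerR _ (y - x) :=
    funext fun y => (key_hasfderiv p x y).fderiv
  rw [iteratedFDeriv_two_apply, hfd, (key_hasfderiv2 p x θ).fderiv]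
  simp [Matrix.cons_val_zero, Matrix.cons_val_one, Matrix.head_cons,
    ContinuousLinearMap.smulRight_apply, real_inner_smul_left,
    EuclideanSpace.inner_single_right, real_inner_comm]
  rcases eq_or_ne i j with h | h
  · subst h; simp; ring
  · simp [h, Ne.symm h]; ring

end lyapunov_aux

/-- For `α ∈ (1,2)`, `p ∈ [1,α)` and `V_p(θ) = (1 + ‖θ - x‖²)^{p/2}`:
(i) `‖∇V_p(θ)‖ ≤ p ‖θ - x‖^{p-1}`, and (ii) the Frobenius norm of the Hessian of `V_p`
is at most `p(√d + 2)`. -/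
theorem lyapunov_gradient_hessian_bounds
    {d : ℕ} (hd : 1 ≤ d) (α p : ℝ) (hα1 : 1 < α) (hα2 : α < 2)
    (hp1 : 1 ≤ p) (hpα : p < α)
    (x θ : EuclideanSpace ℝ (Fin d)) :
    ‖gradient (fun ϑ => (1 + ‖ϑ - x‖ ^ 2) ^ (p / 2)) θ‖ ≤ p * ‖θ - x‖ ^ (p - 1)
    ∧
    Real.sqrt (∑ i : Fin d, ∑ j : Fin d,
        (iteratedFDeriv ℝ 2 (fun ϑ => (1 + ‖ϑ - x‖ ^ 2) ^ (p / 2)) θ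
          ![EuclideanSpace.single i (1 : ℝ), EuclideanSpace.single j (1 : ℝ)]) ^ 2)
      ≤ p * (Real.sqrt d + 2) := by
  have hp2 : p < 2 := lt_trans hpα hα2
  have hpos : (0:ℝ) < 1 + ‖θ - x‖ ^ 2 := by positivity
  have hp0 : (0:ℝ) < p := by linarith
  constructor
  · -- gradient bound
    have hgrad : HasGradientAt (fun ϑ => (1 + ‖ϑ - x‖ ^ 2) ^ (p / 2))
        ((p * (1 + ‖θ - x‖ ^ 2) ^ (p / 2 - 1)) • (θ - x)) θ := by
      rw [hasGradientAt_iff_hasFDerivAt]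
      refine (key_hasfderiv p x θ).congr_fderiv ?_
      ext v
      simp [real_inner_smul_left]
    rw [hgrad.gradient]
    have hc0 : 0 ≤ p * (1 + ‖θ - x‖ ^ 2) ^ (p / 2 - 1) := by positivity
    rw [norm_smul, Real.norm_eq_abs, abs_of_nonneg hc0]
    set r := ‖θ - x‖ with hr
    have hr0 : 0 ≤ r := norm_nonneg _
    rcases eq_or_lt_of_le hr0 with h0 | h0
    · simp [← h0]
      positivity
    · have h1 : (1 + r ^ 2) ^ (p / 2 - 1) ≤ (r ^ 2 : ℝ) ^ (p / 2 - 1) :=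
        Real.rpow_le_rpow_of_nonpos (by positivity) (by linarith [sq_nonneg r]) (by linarith)
      have h2 : (r ^ 2 : ℝ) ^ (p / 2 - 1) = r ^ (p - 2) := by
        rw [← Real.rpow_natCast r 2, ← Real.rpow_mul hr0]
        norm_num
        ring_nf
      have h3 : r ^ (p - 2) * r = r ^ (p - 1) := by
        rw [← Real.rpow_add_one h0.ne']
        ring_nf
      calc p * (1 + r ^ 2) ^ (p / 2 - 1) * r ≤ p * (r ^ 2 : ℝ) ^ (p / 2 - 1) * r :=
            mul_le_mul_of_nonneg_right (mul_le_mul_of_nonneg_left h1 hp0.le) hr0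
        _ = p * r ^ (p - 1) := by rw [h2, mul_assoc, h3]
  · -- Hessian bound
    set u := θ - x with hu
    set s : ℝ := 1 + ‖u‖ ^ 2 with hs
    set a : ℝ := p * (p - 2) * s ^ (p / 2 - 2) with ha
    set c : ℝ := p * s ^ (p / 2 - 1) with hc
    have hEntry : ∀ i j : Fin d,
        (iteratedFDeriv ℝ 2 (fun ϑ => (1 + ‖ϑ - x‖ ^ 2) ^ (p / 2)) θ
          ![EuclideanSpace.single i (1 : ℝ), EuclideanSpace.single j (1 : ℝ)]) ^ 2
        = (a * (u i * u j) + (if i = j then c else 0)) ^ 2 := by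
      intro i j
      rw [hessian_entry p x θ i j]
    have hrw : (∑ i : Fin d, ∑ j : Fin d,
        (iteratedFDeriv ℝ 2 (fun ϑ => (1 + ‖ϑ - x‖ ^ 2) ^ (p / 2)) θ
          ![EuclideanSpace.single i (1 : ℝ), EuclideanSpace.single j (1 : ℝ)]) ^ 2)
        = ∑ i : Fin d, ∑ j : Fin d, (a * (u i * u j) + (if i = j then c else 0)) ^ 2 :=
      Finset.sum_congr rfl fun i _ => Finset.sum_congr rfl fun j _ => hEntry i j
    rw [hrw]
    refine le_trans (frobenius_bound a c u) ?_
    -- now bound |a| * ‖u‖² + √d * |c| ≤ p * (√d + 2)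
    have hs1 : (1:ℝ) ≤ s := by rw [hs]; nlinarith [sq_nonneg ‖u‖]
    have hspos : (0:ℝ) < s := by linarith
    have hX : (0:ℝ) ≤ s ^ (p / 2 - 2) := Real.rpow_nonneg hspos.le _
    have hY : (0:ℝ) ≤ s ^ (p / 2 - 1) := Real.rpow_nonneg hspos.le _
    have hcabs : |c| = c := abs_of_nonneg (by positivity)
    have hcle : c ≤ p := by
      have := Real.rpow_le_one_of_one_le_of_nonpos hs1 (by linarith : p / 2 - 1 ≤ 0)
      calc c = p * s ^ (p / 2 - 1) := hc
        _ ≤ p * 1 := mul_le_mul_of_nonneg_left this hp0.le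
        _ = p := mul_one p
    have haabs : |a| = p * (2 - p) * s ^ (p / 2 - 2) := by
      have hneg : a ≤ 0 := by
        rw [ha]
        have : p * (p - 2) ≤ 0 := by nlinarith
        exact mul_nonpos_of_nonpos_of_nonneg this hX
      rw [abs_of_nonpos hneg, ha]; ring
    have hmul : s ^ (p / 2 - 2) * ‖u‖ ^ 2 ≤ s ^ (p / 2 - 1) := by
      have h1 : s ^ (p / 2 - 2) * ‖u‖ ^ 2 ≤ s ^ (p / 2 - 2) * s :=
        mul_le_mul_of_nonneg_left (by rw [hs]; linarith) hX
      have h2 : s ^ (p / 2 - 2) * s = s ^ (p / 2 - 1) := by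
        rw [← Real.rpow_add_one hspos.ne']
        ring_nf
      linarith [h2 ▸ h1]
    have hsle1 : s ^ (p / 2 - 1) ≤ 1 :=
      Real.rpow_le_one_of_one_le_of_nonpos hs1 (by linarith)
    have hale : |a| * ‖u‖ ^ 2 ≤ p := by
      calc |a| * ‖u‖ ^ 2 = p * ((2 - p) * (s ^ (p / 2 - 2) * ‖u‖ ^ 2)) := by
            rw [haabs]; ring
        _ ≤ p * ((2 - p) * s ^ (p / 2 - 1)) := by
            apply mul_le_mul_of_nonneg_left _ hp0.le
            exact mul_le_mul_of_nonneg_left hmul (by linarith)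
        _ ≤ p * 1 := by
            apply mul_le_mul_of_nonneg_left _ hp0.le
            calc (2 - p) * s ^ (p / 2 - 1) ≤ 1 * 1 :=
                  mul_le_mul (by linarith) hsle1 hY one_pos.le
              _ = 1 := mul_one 1
        _ = p := mul_one p
    have hd0 : (0:ℝ) ≤ Real.sqrt d := Real.sqrt_nonneg _
    calc |a| * ‖u‖ ^ 2 + Real.sqrt d * |c| ≤ p + Real.sqrt d * p := by
          rw [hcabs]
          exact add_le_add hale (mul_le_mul_of_nonneg_left hcle hd0)
      _ ≤ p * (Real.sqrt d + 2) := by nlinarith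
end

section
/- Consider ridge regression with loss f(θ, x) := (1/2)(⟨θ, a⟩ − b)² + (λ/2)‖θ‖², where x = (a, b) with a ∈ ℝ^d, b ∈ ℝ, and λ > 0. Let R > 0 and suppose ‖x‖ ≤ R and ‖x̂‖ ≤ R (norm of the pair (a,b) in ℝ^d × ℝ). Then for all θ, θ̂ ∈ ℝ^d, ‖∇_θ f(θ, x) − ∇_θ f(θ̂, x̂)‖ ≤ (R² + λ)‖θ − θ̂‖ + 2R ‖x − x̂‖ (‖θ‖ + ‖θ̂‖ + 1). -/
open scoped BigOperators RealInnerProductSpace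

/-- Ridge regression `f(θ,(a,b)) = (1/2)(⟨θ,a⟩ - b)² + (λ/2)‖θ‖²`, with
gradient `∇_θ f(θ,(a,b)) = ⟨a,θ⟩ a - b a + λ θ`, satisfies Assumption 1
(pseudo-Lipschitz gradients) with `K₁ = R² + λ` and `K₂ = 2R` whenever the data pairs
have Euclidean norm at most `R`. -/
theorem ridge_regression_pseudo_lipschitz
    {d : ℕ} (lam R : ℝ) (hlam : 0 < lam) (hR : 0 < R)
    (a a' : EuclideanSpace ℝ (Fin d)) (b b' : ℝ)
    (hx : Real.sqrt (‖a‖ ^ 2 + b ^ 2) ≤ R)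
    (hx' : Real.sqrt (‖a'‖ ^ 2 + b' ^ 2) ≤ R)
    (θ θ' : EuclideanSpace ℝ (Fin d)) :
    ‖(⟪a, θ⟫ • a - b • a + lam • θ) - (⟪a', θ'⟫ • a' - b' • a' + lam • θ')‖
      ≤ (R ^ 2 + lam) * ‖θ - θ'‖
        + 2 * R * Real.sqrt (‖a - a'‖ ^ 2 + (b - b') ^ 2) * (‖θ‖ + ‖θ'‖ + 1) := by
  set Δ := Real.sqrt (‖a - a'‖ ^ 2 + (b - b') ^ 2) with hΔdef
  have hΔ0 : 0 ≤ Δ := Real.sqrt_nonneg _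
  have haR : ‖a‖ ≤ R := by
    have h := Real.sqrt_le_sqrt (show ‖a‖ ^ 2 ≤ ‖a‖ ^ 2 + b ^ 2 by nlinarith [sq_nonneg b])
    rw [Real.sqrt_sq (norm_nonneg a)] at h
    exact h.trans hx
  have ha'R : ‖a'‖ ≤ R := by
    have h := Real.sqrt_le_sqrt (show ‖a'‖ ^ 2 ≤ ‖a'‖ ^ 2 + b' ^ 2 by nlinarith [sq_nonneg b'])
    rw [Real.sqrt_sq (norm_nonneg a')] at h
    exact h.trans hx'
  have hbR : |b| ≤ R := by
    have h := Real.sqrt_le_sqrt (show b ^ 2 ≤ ‖a‖ ^ 2 + b ^ 2 by nlinarith [sq_nonneg ‖a‖])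
    rw [Real.sqrt_sq_eq_abs] at h
    exact h.trans hx
  have hΔa : ‖a - a'‖ ≤ Δ := by
    have h := Real.sqrt_le_sqrt
      (show ‖a - a'‖ ^ 2 ≤ ‖a - a'‖ ^ 2 + (b - b') ^ 2 by nlinarith [sq_nonneg (b - b')])
    rw [Real.sqrt_sq (norm_nonneg _)] at h
    exact h
  have hΔb : |b - b'| ≤ Δ := by
    have h := Real.sqrt_le_sqrt
      (show (b - b') ^ 2 ≤ ‖a - a'‖ ^ 2 + (b - b') ^ 2 by nlinarith [sq_nonneg ‖a - a'‖])
    rw [Real.sqrt_sq_eq_abs] at h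
    exact h
  have key : (⟪a, θ⟫ • a - b • a + lam • θ) - (⟪a', θ'⟫ • a' - b' • a' + lam • θ')
      = (⟪a, θ - θ'⟫ • a + ⟪a - a', θ'⟫ • a + ⟪a', θ'⟫ • (a - a'))
        - b • (a - a') - (b - b') • a' + lam • (θ - θ') := by
    simp only [inner_sub_left, inner_sub_right, sub_smul, smul_sub]
    module
  rw [key]
  have t1 : ‖(⟪a, θ - θ'⟫ : ℝ) • a‖ ≤ R * R * ‖θ - θ'‖ := by
    rw [norm_smul, Real.norm_eq_abs]
    calc |⟪a, θ - θ'⟫| * ‖a‖ ≤ (‖a‖ * ‖θ - θ'‖) * ‖a‖ := by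
          gcongr; exact abs_real_inner_le_norm a (θ - θ')
      _ ≤ (R * ‖θ - θ'‖) * R := by gcongr
      _ = R * R * ‖θ - θ'‖ := by ring
  have t2 : ‖(⟪a - a', θ'⟫ : ℝ) • a‖ ≤ Δ * ‖θ'‖ * R := by
    rw [norm_smul, Real.norm_eq_abs]
    calc |⟪a - a', θ'⟫| * ‖a‖ ≤ (‖a - a'‖ * ‖θ'‖) * ‖a‖ := by
          gcongr; exact abs_real_inner_le_norm _ _
      _ ≤ (Δ * ‖θ'‖) * R := by gcongr
      _ = Δ * ‖θ'‖ * R := rfl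
  have t3 : ‖(⟪a', θ'⟫ : ℝ) • (a - a')‖ ≤ R * ‖θ'‖ * Δ := by
    rw [norm_smul, Real.norm_eq_abs]
    calc |⟪a', θ'⟫| * ‖a - a'‖ ≤ (‖a'‖ * ‖θ'‖) * ‖a - a'‖ := by
          gcongr; exact abs_real_inner_le_norm _ _
      _ ≤ (R * ‖θ'‖) * Δ := by gcongr
      _ = R * ‖θ'‖ * Δ := rfl
  have t4 : ‖b • (a - a')‖ ≤ R * Δ := by
    rw [norm_smul, Real.norm_eq_abs]
    exact mul_le_mul hbR hΔa (norm_nonneg _) hR.le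
  have t5 : ‖(b - b') • a'‖ ≤ Δ * R := by
    rw [norm_smul, Real.norm_eq_abs]
    exact mul_le_mul hΔb ha'R (norm_nonneg _) hΔ0
  have t6 : ‖lam • (θ - θ')‖ = lam * ‖θ - θ'‖ := by
    rw [norm_smul, Real.norm_eq_abs, abs_of_pos hlam]
  have tri : ‖(⟪a, θ - θ'⟫ • a + ⟪a - a', θ'⟫ • a + ⟪a', θ'⟫ • (a - a'))
        - b • (a - a') - (b - b') • a' + lam • (θ - θ')‖
      ≤ ‖(⟪a, θ - θ'⟫ : ℝ) • a‖ + ‖(⟪a - a', θ'⟫ : ℝ) • a‖ + ‖(⟪a', θ'⟫ : ℝ) • (a - a')‖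
        + ‖b • (a - a')‖ + ‖(b - b') • a'‖ + ‖lam • (θ - θ')‖ := by
    calc _ ≤ ‖(⟪a, θ - θ'⟫ • a + ⟪a - a', θ'⟫ • a + ⟪a', θ'⟫ • (a - a'))
        - b • (a - a') - (b - b') • a'‖ + ‖lam • (θ - θ')‖ := norm_add_le _ _
      _ ≤ (‖(⟪a, θ - θ'⟫ • a + ⟪a - a', θ'⟫ • a + ⟪a', θ'⟫ • (a - a'))
        - b • (a - a')‖ + ‖(b - b') • a'‖) + ‖lam • (θ - θ')‖ := by
          gcongr; exact norm_sub_le _ _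
      _ ≤ ((‖⟪a, θ - θ'⟫ • a + ⟪a - a', θ'⟫ • a + ⟪a', θ'⟫ • (a - a')‖
        + ‖b • (a - a')‖) + ‖(b - b') • a'‖) + ‖lam • (θ - θ')‖ := by
          gcongr; exact norm_sub_le _ _
      _ ≤ (((‖(⟪a, θ - θ'⟫ : ℝ) • a + ⟪a - a', θ'⟫ • a‖ + ‖(⟪a', θ'⟫ : ℝ) • (a - a')‖)
        + ‖b • (a - a')‖) + ‖(b - b') • a'‖) + ‖lam • (θ - θ')‖ := by
          gcongr; exact norm_add_le _ _
      _ ≤ _ := by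
          have := norm_add_le ((⟪a, θ - θ'⟫ : ℝ) • a) ((⟪a - a', θ'⟫ : ℝ) • a)
          linarith
  have hθ0 : 0 ≤ ‖θ‖ := norm_nonneg _
  have hθ'0 : 0 ≤ ‖θ'‖ := norm_nonneg _
  nlinarith [mul_nonneg (mul_nonneg hR.le hΔ0) hθ0, mul_nonneg hR.le hΔ0]
end

section
/- Consider ℓ₂-regularized logistic regression with loss f(θ, x) := log(1 + exp(−⟨x, θ⟩)) + (λ/2)‖θ‖², where x, θ ∈ ℝ^d and λ > 0. Let R > 0 and suppose ‖x‖ ≤ R and ‖x'‖ ≤ R. Then for all θ, θ' ∈ ℝ^d, ‖∇_θ f(θ', x') − ∇_θ f(θ, x)‖ ≤ (R² + λ)‖θ − θ'‖ + max{1, R} ‖x − x'‖ (‖θ‖ + ‖θ'‖ + 1). -/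
open scoped RealInnerProductSpace
open Real

private lemma sig_eq (t : ℝ) : exp (-t) / (1 + exp (-t)) = 1 / (1 + exp t) := by
  rw [exp_neg]
  have h : 0 < exp t := exp_pos t
  field_simp
  ring

private lemma sig_nonneg (t : ℝ) : 0 ≤ exp (-t) / (1 + exp (-t)) := by
  have h := exp_pos (-t)
  positivity

private lemma sig_le_one (t : ℝ) : exp (-t) / (1 + exp (-t)) ≤ 1 := by
  have h := exp_pos (-t)
  rw [div_le_one (by linarith)]
  linarith

private lemma sig_lip (a b : ℝ) :
    |exp (-a) / (1 + exp (-a)) - exp (-b) / (1 + exp (-b))| ≤ |a - b| := by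
  rw [sig_eq, sig_eq]
  have key : ∀ u v : ℝ, u ≤ v → 1 / (1 + exp u) - 1 / (1 + exp v) ≤ v - u := by
    intro u v huv
    have h1 : 0 < exp u := exp_pos u
    have h2 : 0 < exp v := exp_pos v
    have h3 : exp u ≥ exp v * (u - v + 1) := by
      have := add_one_le_exp (u - v)
      calc exp v * (u - v + 1) ≤ exp v * exp (u - v) := by nlinarith
        _ = exp u := by rw [← exp_add]; ring_nf
    rw [div_sub_div _ _ (by positivity) (by positivity), div_le_iff₀ (by positivity)]
    nlinarith [mul_nonneg (mul_nonneg h1.le h2.le) (sub_nonneg.mpr huv),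
      mul_nonneg h1.le (sub_nonneg.mpr huv), mul_nonneg h2.le (sub_nonneg.mpr huv)]
  rcases le_total a b with h | h
  · have h1 := exp_pos a; have h2 := exp_pos b
    have he : exp a ≤ exp b := exp_le_exp.mpr h
    have hd : (1:ℝ)/(1+exp b) ≤ 1/(1+exp a) := by
      apply one_div_le_one_div_of_le <;> linarith
    rw [abs_of_nonneg (by linarith), abs_of_nonpos (by linarith)]
    linarith [key a b h]
  · have h1 := exp_pos a; have h2 := exp_pos b
    have he : exp b ≤ exp a := exp_le_exp.mpr h
    have hd : (1:ℝ)/(1+exp a) ≤ 1/(1+exp b) := by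
      apply one_div_le_one_div_of_le <;> linarith
    rw [abs_of_nonpos (by linarith), abs_of_nonneg (by linarith)]
    linarith [key b a h]

/-- ℓ₂-regularized logistic regression
`f(θ,x) = log(1 + exp(-⟨x,θ⟩)) + (λ/2)‖θ‖²`, with gradient
`∇_θ f(θ,x) = -(e^{-⟨x,θ⟩}/(1 + e^{-⟨x,θ⟩})) x + λ θ`, satisfies Assumption 1
(pseudo-Lipschitz gradients) with `K₁ = R² + λ` and `K₂ = max{1, R}` whenever the data
have norm at most `R`. -/
theorem logistic_regression_pseudo_lipschitz
    {d : ℕ} (lam R : ℝ) (hlam : 0 < lam) (hR : 0 < R)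
    (x x' : EuclideanSpace ℝ (Fin d)) (hx : ‖x‖ ≤ R) (hx' : ‖x'‖ ≤ R)
    (θ θ' : EuclideanSpace ℝ (Fin d)) :
    ‖((-(exp (-⟪x', θ'⟫) / (1 + exp (-⟪x', θ'⟫)))) • x' + lam • θ')
        - ((-(exp (-⟪x, θ⟫) / (1 + exp (-⟪x, θ⟫)))) • x + lam • θ)‖
      ≤ (R ^ 2 + lam) * ‖θ - θ'‖ + max 1 R * ‖x - x'‖ * (‖θ‖ + ‖θ'‖ + 1) := by
  set a := ⟪x, θ⟫ with ha
  set b := ⟪x', θ'⟫ with hb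
  set sa := exp (-a) / (1 + exp (-a)) with hsa
  set sb := exp (-b) / (1 + exp (-b)) with hsb
  have hv : ((-sb) • x' + lam • θ') - ((-sa) • x + lam • θ)
      = sa • (x - x') + (sa - sb) • x' + lam • (θ' - θ) := by
    module
  rw [hv]
  have h1 : ‖sa • (x - x') + (sa - sb) • x' + lam • (θ' - θ)‖
      ≤ ‖sa‖ * ‖x - x'‖ + ‖sa - sb‖ * ‖x'‖ + ‖lam‖ * ‖θ' - θ‖ := by
    calc ‖sa • (x - x') + (sa - sb) • x' + lam • (θ' - θ)‖
        ≤ ‖sa • (x - x') + (sa - sb) • x'‖ + ‖lam • (θ' - θ)‖ := norm_add_le _ _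
      _ ≤ ‖sa • (x - x')‖ + ‖(sa - sb) • x'‖ + ‖lam • (θ' - θ)‖ := by
          gcongr; exact norm_add_le _ _
      _ = ‖sa‖ * ‖x - x'‖ + ‖sa - sb‖ * ‖x'‖ + ‖lam‖ * ‖θ' - θ‖ := by
          rw [norm_smul, norm_smul, norm_smul]
  have hab : |a - b| ≤ ‖x - x'‖ * ‖θ‖ + R * ‖θ - θ'‖ := by
    have e1 : a - b = ⟪x - x', θ⟫ + ⟪x', θ - θ'⟫ := by
      rw [inner_sub_left, inner_sub_right]; ring
    calc |a - b| ≤ |⟪x - x', θ⟫| + |⟪x', θ - θ'⟫| := by rw [e1]; exact abs_add_le _ _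
      _ ≤ ‖x - x'‖ * ‖θ‖ + ‖x'‖ * ‖θ - θ'‖ := by
          gcongr <;> exact abs_real_inner_le_norm _ _
      _ ≤ ‖x - x'‖ * ‖θ‖ + R * ‖θ - θ'‖ := by gcongr
  have hslip : ‖sa - sb‖ ≤ |a - b| := sig_lip a b
  have hsa1 : ‖sa‖ ≤ 1 := by
    rw [Real.norm_eq_abs, abs_of_nonneg (sig_nonneg a)]; exact sig_le_one a
  have hθθ : ‖θ' - θ‖ = ‖θ - θ'‖ := norm_sub_rev _ _
  have hlamn : ‖lam‖ = lam := abs_of_pos hlam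
  have hA : (0:ℝ) ≤ ‖x - x'‖ := norm_nonneg _
  have hB : (0:ℝ) ≤ ‖θ - θ'‖ := norm_nonneg _
  have hT : (0:ℝ) ≤ ‖θ‖ := norm_nonneg _
  have hT' : (0:ℝ) ≤ ‖θ'‖ := norm_nonneg _
  have hx'n : ‖x'‖ ≤ R := hx'
  have hm1 : (1:ℝ) ≤ max 1 R := le_max_left 1 R
  have hmR : R ≤ max 1 R := le_max_right 1 R
  have hssb : ‖sa - sb‖ * ‖x'‖ ≤ (‖x - x'‖ * ‖θ‖ + R * ‖θ - θ'‖) * R := by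
    have := hslip.trans hab
    have h0 : (0:ℝ) ≤ ‖sa - sb‖ := norm_nonneg _
    nlinarith [norm_nonneg x']
  have key : ‖sa‖ * ‖x - x'‖ + ‖sa - sb‖ * ‖x'‖ + ‖lam‖ * ‖θ' - θ‖
      ≤ (R ^ 2 + lam) * ‖θ - θ'‖ + max 1 R * ‖x - x'‖ * (‖θ‖ + ‖θ'‖ + 1) := by
    rw [hθθ, hlamn]
    have t1 : ‖sa‖ * ‖x - x'‖ ≤ ‖x - x'‖ := by nlinarith [norm_nonneg sa]
    have t2 : ‖x - x'‖ ≤ max 1 R * ‖x - x'‖ := by nlinarith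
    have hM0 : (0:ℝ) ≤ max 1 R := by linarith
    have t3 : R * ‖x - x'‖ * ‖θ‖ ≤ max 1 R * ‖x - x'‖ * ‖θ‖ :=
      mul_le_mul_of_nonneg_right (mul_le_mul_of_nonneg_right hmR hA) hT
    have t4 : max 1 R * ‖x - x'‖ * (‖θ‖ + ‖θ'‖ + 1)
        = max 1 R * ‖x - x'‖ * ‖θ‖ + max 1 R * ‖x - x'‖ * ‖θ'‖ + max 1 R * ‖x - x'‖ := by
      ring
    have t5 : (0:ℝ) ≤ max 1 R * ‖x - x'‖ * ‖θ'‖ :=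
      mul_nonneg (mul_nonneg hM0 hA) hT'
    rw [t4]
    linarith
  linarith [h1, key]
end
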